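/- arXiv:2510.00020 — 11 statements merged into one kernel-verified Lean document; each statement's English description precedes it below -/
import Mathlib

section
/- If the polynomial K_{a,n}(x) = x^n + (1-x)^n + a^n has a rational root for some rational a ≠ -1 and positive integer n, then there exist integers X, Y, Z with XYZ ≠ 0 and an integer m > 2 such that X^m + Y^m = Z^m. -/
theorem stmt_0
    (h : ∃ (a : ℚ) (n : ℕ), a ≠ -1 ∧ 0 < n ∧ ∃ x : ℚ, x ^ n + (1 - x) ^ n + a ^ n = 0) :
    ∃ (X Y Z : ℤ) (m : ℕ), 2 < m ∧ X * Y * Z ≠ 0 ∧ X ^ m + Y ^ m = Z ^ m := by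
  obtain ⟨a, n, ha, hn, x, heq⟩ := h
  -- n is odd
  have hodd : Odd n := by
    by_contra hev
    rw [Nat.not_odd_iff_even] at hev
    have h1 : x ^ n ≥ 0 := hev.pow_nonneg x
    have h2 : (1 - x) ^ n ≥ 0 := hev.pow_nonneg _
    have h3 : a ^ n ≥ 0 := hev.pow_nonneg a
    have hx0 : x ^ n = 0 := by linarith
    have hx1 : (1 - x) ^ n = 0 := by linarith
    have e0 := pow_eq_zero_iff hn.ne' |>.mp hx0
    have e1 := pow_eq_zero_iff hn.ne' |>.mp hx1
    rw [e0] at e1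
    norm_num at e1
  have hinj := (hodd.strictMono_pow (R := ℚ)).injective
  -- n ≠ 1
  have hn1 : n ≠ 1 := by
    rintro rfl
    apply ha
    linarith [heq]
  have hm : 2 < n := by
    rcases hodd with ⟨k, rfl⟩
    omega
  -- x ≠ 0
  have hx0 : x ≠ 0 := by
    rintro rfl
    simp [zero_pow hn.ne'] at heq
    have : a ^ n = (-1 : ℚ) ^ n := by rw [hodd.neg_one_pow]; linarith
    exact ha (hinj this)
  have hx1 : x ≠ 1 := by
    rintro rfl
    simp [zero_pow hn.ne'] at heq
    have : a ^ n = (-1 : ℚ) ^ n := by rw [hodd.neg_one_pow]; linarith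
    exact ha (hinj this)
  have ha0 : a ≠ 0 := by
    rintro rfl
    rw [zero_pow hn.ne', add_zero] at heq
    have h' := hodd.neg_pow (1 - x)
    rw [neg_sub] at h'
    have : x ^ n = (x - 1) ^ n := by linarith
    have := hinj this
    linarith
  -- build integer counterexample
  have hdx : ((x.den : ℚ)) ≠ 0 := by
    exact_mod_cast x.den_nz
  have hda : ((a.den : ℚ)) ≠ 0 := by
    exact_mod_cast a.den_nz
  have hxn : (x.num : ℚ) = x * x.den := by
    exact (Rat.mul_den_eq_num x).symm
  have han : (a.num : ℚ) = a * a.den := by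
    exact (Rat.mul_den_eq_num a).symm
  refine ⟨x.num * a.den, ((x.den : ℤ) - x.num) * a.den, -a.num * x.den, n, hm, ?_, ?_⟩
  · have h1 : x.num ≠ 0 := Rat.num_ne_zero.mpr hx0
    have h2 : (x.den : ℤ) - x.num ≠ 0 := by
      intro hc
      apply hx1
      have hnum : (x.num : ℚ) = (x.den : ℚ) := by exact_mod_cast (by omega : x.num = (x.den : ℤ))
      rw [show x = (x.num:ℚ)/(x.den:ℚ) from (Rat.num_div_den x).symm, hnum, div_self hdx]
    have h3 : a.num ≠ 0 := Rat.num_ne_zero.mpr ha0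
    have h4 : (x.den : ℤ) ≠ 0 := by exact_mod_cast x.den_nz
    have h5 : (a.den : ℤ) ≠ 0 := by exact_mod_cast a.den_nz
    exact mul_ne_zero (mul_ne_zero (mul_ne_zero h1 h5) (mul_ne_zero h2 h5))
      (mul_ne_zero (neg_ne_zero.mpr h3) h4)
  · have key : ((x.num * a.den) ^ n + (((x.den : ℤ) - x.num) * a.den) ^ n : ℚ) =
        (((-a.num * x.den) ^ n : ℤ) : ℚ) := by
      push_cast
      rw [hxn, han]
      have e : (x * x.den * a.den) ^ n + (((x.den : ℚ) - x * x.den) * a.den) ^ n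
          - (-(a * a.den) * x.den) ^ n
          = (x ^ n + (1 - x) ^ n + a ^ n) * ((x.den : ℚ) * a.den) ^ n := by
        rw [show (x * (x.den:ℚ) * a.den) = x * ((x.den:ℚ) * a.den) by ring,
            show (((x.den:ℚ) - x * x.den) * a.den) = (1 - x) * ((x.den:ℚ) * a.den) by ring,
            show (-(a * (a.den:ℚ)) * x.den) = -(a * ((x.den:ℚ) * a.den)) by ring,
            hodd.neg_pow, mul_pow, mul_pow, mul_pow]
        ring
      rw [heq, zero_mul] at e
      linarith
    exact_mod_cast key
end

section
/- If |a| ≤ 1/2, then every complex root of K_{a,n}(x) = x^n + (1-x)^n + a^n lies on the vertical line Re(x) = 1/2. -/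
open Polynomial

noncomputable section StmtAux

lemma stmt3_one_add_exp (θ : ℝ) :
    1 + Complex.exp (θ * Complex.I) =
      Complex.exp ((θ/2 : ℝ) * Complex.I) * (2 * (Real.cos (θ/2) : ℂ)) := by
  rw [Complex.exp_mul_I, Complex.exp_mul_I]
  rw [show Complex.cos θ = (Real.cos θ : ℂ) from (Complex.ofReal_cos θ).symm,
      show Complex.sin θ = (Real.sin θ : ℂ) from (Complex.ofReal_sin θ).symm,
      show Complex.cos ((θ/2:ℝ):ℂ) = ((Real.cos (θ/2) : ℝ) : ℂ) from (Complex.ofReal_cos _).symm,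
      show Complex.sin ((θ/2:ℝ):ℂ) = ((Real.sin (θ/2) : ℝ) : ℂ) from (Complex.ofReal_sin _).symm]
  have h1 : Real.cos θ = 2 * Real.cos (θ/2)^2 - 1 := by
    have := Real.cos_sq (θ/2)
    rw [show 2*(θ/2) = θ by ring] at this
    nlinarith [this]
  have h2 : Real.sin θ = 2 * Real.sin (θ/2) * Real.cos (θ/2) := by
    have := Real.sin_two_mul (θ/2)
    rw [show 2*(θ/2) = θ by ring] at this
    linarith
  rw [h1, h2]
  push_cast
  ring

lemma stmt3_exp_inj {x y : ℝ} (h1 : 0 < y - x) (h2 : y - x < 2 * Real.pi)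
    (he : Complex.exp (x * Complex.I) = Complex.exp (y * Complex.I)) : False := by
  have hexp : Complex.exp (((y - x : ℝ)) * Complex.I) = 1 := by
    rw [show ((y - x : ℝ) : ℂ) * Complex.I
          = (y : ℝ) * Complex.I - (x : ℝ) * Complex.I by push_cast; ring]
    rw [Complex.exp_sub, ← he]
    field_simp
  rw [Complex.exp_eq_one_iff] at hexp
  obtain ⟨k, hk⟩ := hexp
  have hk' : ((y - x : ℝ) : ℂ) = ((k * (2 * Real.pi) : ℝ) : ℂ) := by
    rw [show ((k:ℂ)) * (2 * (Real.pi:ℂ) * Complex.I)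
          = (((k * (2*Real.pi) : ℝ)):ℂ) * Complex.I by push_cast; ring] at hk
    exact mul_right_cancel₀ Complex.I_ne_zero hk
  have hkr : y - x = k * (2 * Real.pi) := by exact_mod_cast hk'
  have hpi := Real.pi_pos
  have hk0 : (0:ℝ) < (k:ℝ) * (2 * Real.pi) := by rw [← hkr]; exact h1
  have hk2 : (k:ℝ) * (2 * Real.pi) < 2 * Real.pi := by rw [← hkr]; exact h2
  have hkpos : 0 < k := by
    by_contra hkn
    push_neg at hkn
    have hkr' : (k:ℝ) ≤ 0 := by exact_mod_cast hkn
    have hh : (k:ℝ) * (2 * Real.pi) ≤ 0 :=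
      mul_nonpos_of_nonpos_of_nonneg hkr' (by positivity)
    linarith
  have hk1 : (1:ℤ) ≤ k := by omega
  have hk1' : (1:ℝ) ≤ (k:ℝ) := by exact_mod_cast hk1
  have hh2 : 2 * Real.pi ≤ (k:ℝ) * (2 * Real.pi) :=
    le_mul_of_one_le_left (by positivity) hk1'
  linarith

theorem stmt_3 (a : ℝ) (ha : |a| ≤ 1 / 2) (n : ℕ) (hn : 1 ≤ n)
    (z : ℂ) (hz : z ^ n + (1 - z) ^ n + (a : ℂ) ^ n = 0) :
    z.re = 1 / 2 := by
  by_contra hre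
  set b : ℝ := a ^ n with hb
  have hBdef : (a : ℂ) ^ n = ((b : ℝ) : ℂ) := by push_cast [hb]; ring
  have hbabs : |b| ≤ (1/2 : ℝ) ^ n := by
    rw [hb, abs_pow]
    exact pow_le_pow_left₀ (abs_nonneg a) ha n
  have hhalf : (1/2 : ℝ) ^ n ≤ 1/2 := by
    calc (1/2 : ℝ) ^ n ≤ (1/2 : ℝ) ^ 1 :=
          pow_le_pow_of_le_one (by norm_num) (by norm_num) hn
      _ = 1/2 := pow_one _
  have hone : ((1:ℂ) + ((b : ℝ) : ℂ)) ≠ 0 := by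
    intro h
    have : (1:ℝ) + b = 0 := by exact_mod_cast h
    have := abs_le.mp (hbabs.trans hhalf)
    linarith [this.1]
  have hn0 : (n : ℝ) ≠ 0 := by positivity
  have hnpos : (0:ℝ) < n := by positivity
  have hpi := Real.pi_pos
  -- the polynomial
  set P : Polynomial ℂ := X ^ n + C ((b : ℝ) : ℂ) * (1 + X) ^ n + 1 with hP
  have hPne : P ≠ 0 := by
    intro h
    have he : P.eval 0 = 0 := by rw [h]; simp
    rw [hP] at he
    simp only [eval_add, eval_mul, eval_pow, eval_one, eval_X, eval_C] at he
    rw [zero_pow (by omega : n ≠ 0)] at he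
    apply hone
    rw [show (1 : ℂ) + (0:ℂ) = 1 by ring] at he
    rw [one_pow] at he
    linear_combination he
  have hdeg : P.natDegree ≤ n := by
    have h1 : (1 + X : ℂ[X]).natDegree ≤ 1 := by
      refine (natDegree_add_le _ _).trans ?_
      simp
    have h2 : (((1:ℂ[X]) + X) ^ n).natDegree ≤ n := by
      refine (natDegree_pow_le).trans ?_
      calc n * (1 + X : ℂ[X]).natDegree ≤ n * 1 := Nat.mul_le_mul_left n h1
        _ = n := Nat.mul_one n
    have h3 : (C ((b : ℝ) : ℂ) * (1 + X) ^ n).natDegree ≤ n :=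
      (natDegree_C_mul_le _ _).trans h2
    rw [hP]
    refine (natDegree_add_le _ _).trans ?_
    simp only [natDegree_one]
    refine max_le ?_ (by omega)
    refine (natDegree_add_le _ _).trans ?_
    simp only [natDegree_X_pow]
    omega
  have hz0 : z ≠ 0 := by
    intro h
    rw [h] at hz
    rw [zero_pow (by omega : n ≠ 0), sub_zero, one_pow, hBdef] at hz
    apply hone
    linear_combination hz
  -- u and its properties
  set u : ℂ := (1 - z) / z with hu
  have hevalu : P.eval u = 0 := by
    have hzn : z ^ n ≠ 0 := pow_ne_zero _ hz0
    have h1u : 1 + u = 1 / z := by rw [hu, eq_div_iff hz0, add_mul, div_mul_cancel₀ _ hz0]; ring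
    have hmul : P.eval u * z ^ n = 0 := by
      rw [hP]
      simp only [eval_add, eval_mul, eval_pow, eval_one, eval_X, eval_C, h1u]
      have he : (u ^ n + ((b:ℝ):ℂ) * (1/z) ^ n + 1) * z ^ n
          = (1 - z) ^ n + ((b:ℝ):ℂ) + z ^ n := by
        rw [add_mul, add_mul, mul_assoc, ← mul_pow, ← mul_pow, hu, one_div_mul_cancel hz0, div_mul_cancel₀ _ hz0, one_pow]; ring
      rw [he, ← hBdef]
      linear_combination hz
    rcases mul_eq_zero.mp hmul with h | h
    · exact h
    · exact absurd h hzn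
  have habsu : ‖u‖ ≠ 1 := by
    intro h
    rw [hu, norm_div, div_eq_one_iff_eq (by simpa using hz0)] at h
    have h3 : Complex.normSq (1 - z) = Complex.normSq z := by
      rw [← Complex.sq_norm, ← Complex.sq_norm, h]
    rw [Complex.normSq_apply, Complex.normSq_apply] at h3
    simp only [Complex.sub_re, Complex.sub_im, Complex.one_re, Complex.one_im] at h3
    apply hre
    nlinarith [h3]
  -- the trig function
  set f : ℝ → ℝ := fun θ => 2 * Real.cos (n * θ / 2) + b * 2^n * Real.cos (θ/2) ^ n with hf
  have hfcont : Continuous f := by fun_prop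
  -- evaluation identity
  have hPexp : ∀ θ : ℝ, P.eval (Complex.exp (θ * Complex.I))
      = Complex.exp (((n * θ / 2 : ℝ)) * Complex.I) * ((f θ : ℝ) : ℂ) := by
    intro θ
    have e1 : Complex.exp (θ * Complex.I) ^ n = Complex.exp ((n * θ : ℝ) * Complex.I) := by
      rw [← Complex.exp_nat_mul]
      push_cast
      ring_nf
    have e2 : (1 : ℂ) + Complex.exp ((n * θ : ℝ) * Complex.I)
        = Complex.exp ((n * θ / 2 : ℝ) * Complex.I) * (2 * (Real.cos (n * θ / 2) : ℂ)) :=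
      stmt3_one_add_exp (n * θ)
    have e3 : ((1 : ℂ) + Complex.exp (θ * Complex.I)) ^ n
        = Complex.exp ((n * θ / 2 : ℝ) * Complex.I) * ((2:ℂ)^n * (Real.cos (θ/2) : ℂ)^n) := by
      rw [stmt3_one_add_exp θ, mul_pow, ← Complex.exp_nat_mul]
      push_cast
      ring_nf
    rw [hP]
    simp only [eval_add, eval_mul, eval_pow, eval_one, eval_X, eval_C]
    rw [e1, e3]
    push_cast [hf] at e2 ⊢
    linear_combination e2
  -- sign at the sample points
  have hsign : ∀ j : ℕ, ((-1:ℝ))^j * f (2 * Real.pi * j / n) ≥ 1 := by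
    intro j
    have harg : (n : ℝ) * (2 * Real.pi * j / n) / 2 = j * Real.pi := by
      field_simp
    have hcos : Real.cos ((n : ℝ) * (2 * Real.pi * j / n) / 2) = (-1)^j := by
      rw [harg]
      have := Real.cos_nat_mul_pi_sub 0 j
      simpa using this
    have h2 : |Real.cos ((2 * Real.pi * j / n)/2) ^ n| ≤ 1 := by
      rw [abs_pow]
      exact pow_le_one₀ (abs_nonneg _) (Real.abs_cos_le_one _)
    have hbound : |b * 2^n * Real.cos ((2 * Real.pi * j / n)/2) ^ n| ≤ 1 := by
      rw [abs_mul]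
      have hb2 : |b * 2^n| ≤ 1 := by
        rw [abs_mul, abs_of_nonneg (by positivity : (0:ℝ) ≤ 2^n)]
        calc |b| * 2^n ≤ (1/2:ℝ)^n * 2^n :=
              mul_le_mul_of_nonneg_right hbabs (by positivity)
          _ = 1 := by rw [← mul_pow]; norm_num
      calc |b * 2^n| * |Real.cos ((2 * Real.pi * j / n)/2) ^ n|
          ≤ 1 * 1 := mul_le_mul hb2 h2 (abs_nonneg _) (by norm_num)
        _ = 1 := by norm_num
    rw [hf]
    simp only
    rw [hcos]
    have hab := abs_le.mp hbound
    rcases Nat.even_or_odd j with he | ho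
    · rw [he.neg_one_pow]
      nlinarith [hab.1, hab.2]
    · rw [ho.neg_one_pow]
      nlinarith [hab.1, hab.2]
  -- roots via IVT
  have hroot : ∀ j : ℕ, ∃ θ ∈ Set.Ioo (2 * Real.pi * j / n) (2 * Real.pi * (j+1) / n),
      f θ = 0 := by
    intro j
    have hlt : 2 * Real.pi * j / n < 2 * Real.pi * (j+1) / n := by
      rw [div_lt_div_iff₀ hnpos hnpos]
      nlinarith
    rcases Nat.even_or_odd j with he | ho
    · have h1 : 1 ≤ f (2 * Real.pi * j / n) := by
        have := hsign j; rw [he.neg_one_pow] at this; linarith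
      have h2 : f (2 * Real.pi * (j+1) / n) ≤ -1 := by
        have := hsign (j+1)
        rw [show ((j:ℕ)+1) = j+1 from rfl, (Even.add_one he).neg_one_pow] at this
        push_cast at this ⊢
        linarith
      have hmem : (0:ℝ) ∈ Set.Ioo (f (2 * Real.pi * (j+1) / n)) (f (2 * Real.pi * j / n)) :=
        ⟨by linarith, by linarith⟩
      have := intermediate_value_Ioo' hlt.le hfcont.continuousOn hmem
      obtain ⟨θ, hθmem, hθ⟩ := this
      exact ⟨θ, hθmem, hθ⟩
    · have h1 : f (2 * Real.pi * j / n) ≤ -1 := by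
        have := hsign j; rw [ho.neg_one_pow] at this; linarith
      have h2 : 1 ≤ f (2 * Real.pi * (j+1) / n) := by
        have := hsign (j+1)
        rw [(Odd.add_one ho).neg_one_pow] at this
        push_cast at this ⊢
        linarith
      have hmem : (0:ℝ) ∈ Set.Ioo (f (2 * Real.pi * j / n)) (f (2 * Real.pi * (j+1) / n)) :=
        ⟨by linarith, by linarith⟩
      have := intermediate_value_Ioo hlt.le hfcont.continuousOn hmem
      obtain ⟨θ, hθmem, hθ⟩ := this
      exact ⟨θ, hθmem, hθ⟩
  choose g hg using hroot
  -- bounds on g j for j < n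
  have hglb : ∀ j : ℕ, 2 * Real.pi * j / n < g j := fun j => ((hg j).1).1
  have hgub : ∀ j : ℕ, g j < 2 * Real.pi * (j+1) / n := fun j => ((hg j).1).2
  have hgpos : ∀ j : ℕ, 0 < g j := by
    intro j
    have := hglb j
    have h0 : 0 ≤ 2 * Real.pi * j / n := by positivity
    linarith
  have hglt : ∀ j : ℕ, j < n → g j < 2 * Real.pi := by
    intro j hj
    have := hgub j
    have : 2 * Real.pi * (j+1) / n ≤ 2 * Real.pi := by
      rw [div_le_iff₀ hnpos]
      have : (j:ℝ) + 1 ≤ n := by exact_mod_cast Nat.succ_le_of_lt hj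
      nlinarith
    linarith [hgub j]
  have hgmono : ∀ i j : ℕ, i < j → g i < g j := by
    intro i j hij
    have h1 : 2 * Real.pi * (i+1) / n ≤ 2 * Real.pi * j / n := by
      rw [div_le_div_iff₀ hnpos hnpos]
      have hij' : (i:ℝ) + 1 ≤ j := by exact_mod_cast Nat.succ_le_of_lt hij
      have h2 : ((i:ℝ)+1) * (2*Real.pi*n) ≤ (j:ℝ) * (2*Real.pi*n) :=
        mul_le_mul_of_nonneg_right hij' (by positivity)
      linarith [h2]
    calc g i < 2 * Real.pi * (i+1) / n := hgub i
      _ ≤ 2 * Real.pi * j / n := h1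
      _ < g j := hglb j
  -- roots of P on the circle
  set w : ℕ → ℂ := fun j => Complex.exp (g j * Complex.I) with hw
  have hwroot : ∀ j : ℕ, P.eval (w j) = 0 := by
    intro j
    rw [hw]
    simp only
    rw [hPexp (g j), (hg j).2]
    simp
  have hwabs : ∀ j : ℕ, ‖w j‖ = 1 := by
    intro j
    exact Complex.norm_exp_ofReal_mul_I _
  have hwinj : ∀ i j : ℕ, i < n → j < n → w i = w j → i = j := by
    intro i j hi hj hwe
    by_contra hne
    wlog hij : i < j generalizing i j
    · exact this j i hj hi hwe.symm (Ne.symm hne) (by omega)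
    have hd1 : 0 < g j - g i := by linarith [hgmono i j hij]
    have hd2 : g j - g i < 2 * Real.pi := by
      have := hglt j hj
      have := hgpos i
      linarith
    rw [hw] at hwe
    simp only at hwe
    exact stmt3_exp_inj hd1 hd2 hwe
  -- the finset of n+1 distinct roots
  set S : Finset ℂ := insert u ((Finset.range n).image w) with hS
  have hunot : u ∉ (Finset.range n).image w := by
    intro hmem
    rw [Finset.mem_image] at hmem
    obtain ⟨j, _, hj⟩ := hmem
    apply habsu
    rw [← hj]
    exact hwabs j
  have hScard : S.card = n + 1 := by
    rw [hS, Finset.card_insert_of_notMem hunot,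
        Finset.card_image_of_injOn, Finset.card_range]
    intro i hi j hj hij
    exact hwinj i j (Finset.mem_range.mp hi) (Finset.mem_range.mp hj) hij
  have hSsub : S ⊆ P.roots.toFinset := by
    intro x hx
    rw [Multiset.mem_toFinset, Polynomial.mem_roots']
    refine ⟨hPne, ?_⟩
    rw [hS, Finset.mem_insert] at hx
    rcases hx with h | h
    · rw [h]; exact hevalu
    · rw [Finset.mem_image] at h
      obtain ⟨j, _, hj⟩ := h
      rw [← hj]
      exact hwroot j
  have hcount : n + 1 ≤ n := by
    calc n + 1 = S.card := hScard.symm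
      _ ≤ P.roots.toFinset.card := Finset.card_le_card hSsub
      _ ≤ Multiset.card P.roots := Multiset.toFinset_card_le _
      _ ≤ P.natDegree := Polynomial.card_roots' P
      _ ≤ n := hdeg
  omega

end StmtAux
end

section
/- Let K_n(x) = x^n + (1-x)^n + (-1)^n ∈ ℤ[x] and let G = gcd(K_n, K_n') in ℚ[x]. Then G divides x^{n-1} + (-1)^n in ℚ[x]. -/
open Polynomial in
theorem stmt_5 (n : ℕ) (hn : 2 ≤ n) :
    gcd (X ^ n + (1 - X) ^ n + C ((-1 : ℚ)) ^ n)
        (Polynomial.derivative (X ^ n + (1 - X) ^ n + C ((-1 : ℚ)) ^ n)) ∣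
      X ^ (n - 1) + C ((-1 : ℚ)) ^ n := by
  obtain ⟨k, rfl⟩ : ∃ k, n = k + 1 := ⟨n - 1, by omega⟩
  set K : ℚ[X] := X ^ (k + 1) + (1 - X) ^ (k + 1) + C ((-1 : ℚ)) ^ (k + 1) with hK
  have h1 : gcd K (derivative K) ∣ K := gcd_dvd_left _ _
  have h2 : gcd K (derivative K) ∣ derivative K := gcd_dvd_right _ _
  have hd : derivative K = C ((k + 1 : ℚ)) * X ^ k - C ((k + 1 : ℚ)) * (1 - X) ^ k := by
    simp [hK, derivative_pow, derivative_sub, Nat.cast_add]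
    ring
  have hne : ((k : ℚ) + 1) ≠ 0 := by positivity
  have hc : C ((k + 1 : ℚ))⁻¹ * derivative K = X ^ k - (1 - X) ^ k := by
    rw [hd, mul_sub, ← mul_assoc, ← mul_assoc, ← C_mul, inv_mul_cancel₀ hne, C_1, one_mul,
      one_mul]
  have hid : X ^ (k + 1 - 1) + C ((-1 : ℚ)) ^ (k + 1) =
      K + (1 - X) * (C ((k + 1 : ℚ))⁻¹ * derivative K) := by
    rw [hc, hK]
    simp only [Nat.add_sub_cancel]
    ring
  rw [hid]
  exact dvd_add h1 ((h2.mul_left _).mul_left _)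
end

section
/- Let ω = e^{iπ/3} and K_n(x) = x^n + (1-x)^n + (-1)^n. Then: if n ≡ 0 mod 3 then K_n(ω) ≠ 0; if n ≡ 2 mod 3 then ω is a simple root of K_n; and if n ≡ 1 mod 3 then ω is a root of K_n of multiplicity exactly 2. -/
open Polynomial Complex in
theorem stmt_6 (n : ℕ) (hn : 2 ≤ n) :
    (n % 3 = 0 → ((X ^ n + (1 - X) ^ n + C ((-1 : ℂ)) ^ n).eval (Complex.exp (Real.pi * I / 3)) ≠ 0)) ∧
    (n % 3 = 2 → (X ^ n + (1 - X) ^ n + C ((-1 : ℂ)) ^ n).rootMultiplicity (Complex.exp (Real.pi * I / 3)) = 1) ∧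
    (n % 3 = 1 → (X ^ n + (1 - X) ^ n + C ((-1 : ℂ)) ^ n).rootMultiplicity (Complex.exp (Real.pi * I / 3)) = 2) := by
  set ω := Complex.exp (Real.pi * I / 3) with hω
  set P : ℂ[X] := X ^ n + (1 - X) ^ n + C ((-1 : ℂ)) ^ n with hP
  have hωval : ω = (1/2 : ℂ) + (Real.sqrt 3 / 2) * I := by
    rw [hω]
    have : (Real.pi : ℂ) * I / 3 = (Real.pi / 3 : ℝ) * I := by push_cast; ring
    rw [this, Complex.exp_mul_I]
    rw [← Complex.ofReal_cos, ← Complex.ofReal_sin, Real.cos_pi_div_three, Real.sin_pi_div_three]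
    push_cast; ring
  have h3 : ((Real.sqrt 3 : ℝ) : ℂ)^2 = 3 := by
    norm_cast; rw [Real.sq_sqrt] <;> norm_num
  have hquad : ω^2 = ω - 1 := by
    rw [hωval]; linear_combination (I^2/4) * h3 + (3/4 : ℂ) * Complex.I_sq
  have hω3 : ω^3 = -1 := by
    have h : ω^3 = ω * ω^2 := by ring
    rw [h, hquad]; linear_combination hquad
  have hne : ω + ω^2 ≠ 0 := by
    rw [hquad, hωval]
    intro h
    have h2 : (Real.sqrt 3 : ℝ) ≠ 0 := by positivity
    apply h2
    have := congrArg Complex.im h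
    simpa using this
  have hkey : ∀ a b : ℕ, ω ^ (3*a + b) = (-1)^a * ω^b := by
    intro a b; rw [pow_add, pow_mul, hω3]
  have h1ω : (1 : ℂ) - ω = -ω^2 := by rw [hquad]; ring
  have hneg : ∀ m : ℕ, ((-1:ℂ))^(3*m) = (-1)^m := fun m => by rw [pow_mul]; norm_num
  have h1ωpow : ∀ k : ℕ, ((1:ℂ)-ω)^k = (-1)^k * ω^(2*k) := by
    intro k; rw [h1ω, neg_pow, pow_mul]
  have hsub : ∀ a b : ℕ, ((1:ℂ)-ω)^(3*a+b) = (-1)^a * ((-1)^b * ω^(2*b)) := by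
    intro a b
    rw [h1ωpow, pow_add, hneg]
    have h : 2*(3*a+b) = 3*(2*a) + 2*b := by ring
    rw [h, hkey, pow_mul]
    norm_num
    ring
  have ω4 : ω^4 = -ω := by have := hkey 1 1; norm_num at this; simpa using this
  have heval : P.eval ω = ω^n + (1-ω)^n + (-1)^n := by simp [hP]
  have hD : derivative P = C (n:ℂ) * X^(n-1) - C (n:ℂ) * (1-X)^(n-1) := by
    rw [hP, ← map_pow]
    simp [derivative_pow, derivative_X_pow]
    ring
  have hD2 : derivative (derivative P) =
      C ((n:ℂ) * ((n:ℂ)-1)) * X^(n-2) + C ((n:ℂ) * ((n:ℂ)-1)) * (1-X)^(n-2) := by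
    rw [hD]
    have e1 : n - 1 - 1 = n - 2 := by omega
    have e2 : ((n-1 : ℕ) : ℂ) = (n:ℂ) - 1 := by
      push_cast [Nat.cast_sub (by omega : 1 ≤ n)]; ring
    simp [derivative_pow, derivative_X_pow, e1, e2]
    ring
  have hevalD : (derivative P).eval ω = (n:ℂ) * ω^(n-1) - (n:ℂ) * (1-ω)^(n-1) := by
    rw [hD]; simp
  have hevalD2 : (derivative (derivative P)).eval ω =
      (n:ℂ) * ((n:ℂ)-1) * ω^(n-2) + (n:ℂ) * ((n:ℂ)-1) * (1-ω)^(n-2) := by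
    rw [hD2]; simp
  refine ⟨?_, ?_, ?_⟩ <;> intro hr
  · -- n ≡ 0
    obtain ⟨m, rfl⟩ : ∃ m, n = 3*m := ⟨n/3, by omega⟩
    rw [heval]
    have e1 : ω^(3*m) = ((-1:ℂ))^m := by have := hkey m 0; simpa using this
    have e2 : ((1:ℂ)-ω)^(3*m) = ((-1:ℂ))^m := by
      have := hsub m 0; simpa using this
    rw [e1, e2, hneg]
    have hnz : ((-1:ℂ))^m ≠ 0 := pow_ne_zero m (by norm_num)
    intro h; apply hnz; linear_combination h/3
  · -- n ≡ 2
    obtain ⟨m, rfl⟩ : ∃ m, n = 3*m+2 := ⟨n/3, by omega⟩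
    have root0 : P.IsRoot ω := by
      show P.eval ω = 0
      rw [heval, hkey, hsub, pow_add, hneg]
      linear_combination ((-1:ℂ))^m * hquad + ((-1:ℂ))^m * ω4
    have rootD : (derivative P).eval ω ≠ 0 := by
      rw [hevalD]
      have en : 3*m+2-1 = 3*m+1 := by omega
      rw [en, hkey, hsub]
      have hnn : ((3*m+2 : ℕ) : ℂ) ≠ 0 := Nat.cast_ne_zero.mpr (by omega)
      have hnz : ((-1:ℂ))^m ≠ 0 := pow_ne_zero m (by norm_num)
      intro h
      apply hne
      have h1 : ((3*m+2 : ℕ) : ℂ) * ((-1:ℂ)^m * (ω + ω^2)) = 0 := by linear_combination h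
      have h2 := (mul_eq_zero.mp h1).resolve_left hnn
      exact (mul_eq_zero.mp h2).resolve_left hnz
    have hPne : P ≠ 0 := fun h => rootD (by rw [h]; simp)
    have hpos : 0 < P.rootMultiplicity ω := (rootMultiplicity_pos hPne).mpr root0
    have hlt : ¬ 1 < P.rootMultiplicity ω := fun h =>
      rootD ((one_lt_rootMultiplicity_iff_isRoot hPne).mp h).2
    omega
  · -- n ≡ 1
    obtain ⟨m, rfl⟩ : ∃ m, n = 3*m+4 := ⟨(n-4)/3, by omega⟩
    have root0 : P.IsRoot ω := by
      show P.eval ω = 0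
      have en : 3*m+4 = 3*(m+1)+1 := by omega
      have e1 : ω^(3*m+4) = (-1:ℂ)^(m+1) * ω := by rw [en, hkey, pow_one]
      have e2 : ((1:ℂ)-ω)^(3*m+4) = (-1:ℂ)^(m+1) * ((-1)^1 * ω^(2*1)) := by rw [en, hsub]
      have e3 : ((-1:ℂ))^(3*m+4) = (-1)^m := by rw [pow_add, pow_mul]; norm_num
      rw [heval, e1, e2, e3]
      linear_combination ((-1:ℂ))^m * hquad
    have rootD : (derivative P).IsRoot ω := by
      show (derivative P).eval ω = 0
      rw [hevalD]
      have en : 3*m+4-1 = 3*(m+1)+0 := by omega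
      rw [en, hkey, hsub]
      ring
    have rootD2 : (derivative (derivative P)).eval ω ≠ 0 := by
      rw [hevalD2]
      have en : 3*m+4-2 = 3*m+2 := by omega
      rw [en, hkey, hsub]
      have hnn : ((3*m+4 : ℕ) : ℂ) ≠ 0 := Nat.cast_ne_zero.mpr (by omega)
      have hnn1 : ((3*m+4 : ℕ) : ℂ) - 1 ≠ 0 := by
        have : ((3*m+4 : ℕ) : ℂ) - 1 = ((3*m+3 : ℕ) : ℂ) := by push_cast; ring
        rw [this]; exact Nat.cast_ne_zero.mpr (by omega)
      have hnz : ((-1:ℂ))^m ≠ 0 := pow_ne_zero m (by norm_num)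
      intro h
      have h1 : ((3*m+4:ℕ):ℂ) * (((3*m+4:ℕ):ℂ)-1) * ((-1:ℂ)^m * (ω^2 + ω^4)) = 0 := by
        linear_combination h
      have h2 := (mul_eq_zero.mp h1).resolve_left (mul_ne_zero hnn hnn1)
      have h3 := (mul_eq_zero.mp h2).resolve_left hnz
      exact one_ne_zero (show (1:ℂ) = 0 by linear_combination -h3 + hquad + ω4)
    have hPne : P ≠ 0 := fun h => rootD2 (by rw [h]; simp)
    have hgt : 1 < P.rootMultiplicity ω :=
      (one_lt_rootMultiplicity_iff_isRoot hPne).mpr ⟨root0, rootD⟩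
    have hle : ¬ 2 < P.rootMultiplicity ω := by
      intro h
      apply rootD2
      have hfac : ((Nat.factorial 2 : ℕ) : ℂ) ∈ nonZeroDivisors ℂ := by
        rw [mem_nonZeroDivisors_iff_ne_zero]; norm_num [Nat.factorial]
      have := (lt_rootMultiplicity_iff_isRoot_iterate_derivative_of_mem_nonZeroDivisors
        hPne hfac).mp h 2 le_rfl
      simpa using this
    omega
end

section
/- For any rational number a with a ∉ {1, -1} and any integer n ≥ 2, the polynomial K_{a,n}(x) = x^n + (1-x)^n + a^n is square-free over ℚ (i.e., gcd(K_{a,n}, K_{a,n}') = 1). -/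
open Polynomial

lemma aux_prime_pow (p : ℕ) [hp : Fact p.Prime] {b : ℚ} {n : ℕ} (hn : 2 ≤ n)
    (h : b ^ n = (p : ℚ)) : False := by
  have hb : b ≠ 0 := by
    rintro rfl
    rw [zero_pow (by omega)] at h
    exact hp.out.ne_zero (by exact_mod_cast h.symm)
  have h2 := padicValRat.pow (p := p) b (k := n)
  rw [h, padicValRat.self hp.out.one_lt] at h2
  have h3 : (n : ℤ) ∣ 1 := Dvd.intro _ h2.symm
  have := Int.le_of_dvd one_pos h3
  omega

open Polynomial in
theorem stmt_11 (a : ℚ) (ha1 : a ≠ 1) (ha2 : a ≠ -1) (n : ℕ) (hn : 2 ≤ n) :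
    Squarefree (X ^ n + (1 - X) ^ n + C (a ^ n) : ℚ[X]) := by
  set K : ℚ[X] := X ^ n + (1 - X) ^ n + C (a ^ n) with hKdef
  have hn0 : n ≠ 0 := by omega
  have hn1 : n - 1 ≠ 0 := by omega
  have han : a ^ n ≠ -1 := by
    intro h
    have h1 : |a| ^ n = 1 ^ n := by rw [← abs_pow, h, one_pow]; norm_num
    have h2 : |a| = 1 := (pow_left_inj₀ (abs_nonneg a) zero_le_one hn0).mp h1
    rcases abs_eq (by norm_num : (0:ℚ) ≤ 1) |>.mp h2 with h | h
    exacts [ha1 h, ha2 h]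
  have hK0 : K ≠ 0 := by
    intro h
    have h0 : eval 0 K = 0 := by rw [h]; simp
    rw [hKdef] at h0
    simp [zero_pow hn0] at h0
    exact han (by linarith)
  rw [← PerfectField.separable_iff_squarefree]
  rw [← separable_map (algebraMap ℚ ℂ)]
  by_contra hns
  set KC : ℂ[X] := K.map (algebraMap ℚ ℂ) with hKCdef
  have hKC : KC = X ^ n + (1 - X) ^ n + C ((a:ℂ) ^ n) := by
    simp [hKCdef, hKdef, Polynomial.map_add, Polynomial.map_pow, Polynomial.map_sub,
      Polynomial.map_one, Polynomial.map_X, map_C]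
  have hKC0 : KC ≠ 0 := Polynomial.map_ne_zero hK0
  have hgu : ¬ IsUnit (EuclideanDomain.gcd KC (derivative KC)) := by
    intro h
    exact hns (EuclideanDomain.gcd_isUnit_iff.mp h)
  have hg0 : EuclideanDomain.gcd KC (derivative KC) ≠ 0 := by
    intro h
    exact hKC0 (EuclideanDomain.gcd_eq_zero_iff.mp h).1
  obtain ⟨z, hz⟩ := Complex.exists_root (degree_pos_of_ne_zero_of_nonunit hg0 hgu)
  have hz1 : eval z KC = 0 := by
    obtain ⟨c, hc⟩ := EuclideanDomain.gcd_dvd_left KC (derivative KC)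
    rw [hc, eval_mul, hz, zero_mul]
  have hz2 : eval z (derivative KC) = 0 := by
    obtain ⟨c, hc⟩ := EuclideanDomain.gcd_dvd_right KC (derivative KC)
    rw [hc, eval_mul, hz, zero_mul]
  -- key fact for any common root
  have key : ∀ w : ℂ, eval w KC = 0 → eval w (derivative KC) = 0 →
      (starRingEnd ℂ) w = 1 - w ∧ w ^ (n-1) = -(a:ℂ) ^ n := by
    intro w hw1 hw2
    have hd : derivative KC = C (n:ℂ) * X ^ (n-1) - C (n:ℂ) * (1 - X) ^ (n-1) := by
      rw [hKC]
      simp [derivative_pow]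
      ring
    rw [hd] at hw2
    simp only [eval_sub, eval_mul, eval_C, eval_pow, eval_X, eval_one] at hw2
    have hnc : (n:ℂ) ≠ 0 := Nat.cast_ne_zero.mpr hn0
    have h1 : w ^ (n-1) = (1-w) ^ (n-1) := mul_left_cancel₀ hnc (sub_eq_zero.mp hw2)
    rw [hKC] at hw1
    simp only [eval_add, eval_pow, eval_X, eval_sub, eval_one, eval_C] at hw1
    have h2 : w ^ n + (1-w) ^ n + (a:ℂ) ^ n = 0 := hw1
    have hwn : w ^ n = w * w ^ (n-1) := by
      rw [← pow_succ']; congr 1; omega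
    have hwn' : (1-w) ^ n = (1-w) * (1-w) ^ (n-1) := by
      rw [← pow_succ']; congr 1; omega
    have ht : w ^ (n-1) = -(a:ℂ) ^ n := by
      rw [hwn, hwn', ← h1] at h2
      linear_combination h2
    refine ⟨?_, ht⟩
    have habs : ‖w‖ = ‖1 - w‖ := by
      have : ‖w‖ ^ (n-1) = ‖1-w‖ ^ (n-1) := by
        rw [← norm_pow, ← norm_pow, h1]
      exact (pow_left_inj₀ (norm_nonneg _) (norm_nonneg _) hn1).mp this
    have hnsq : Complex.normSq w = Complex.normSq (1 - w) := by
      rw [← Complex.sq_norm, ← Complex.sq_norm, habs]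
    have hre : w.re = 1/2 := by
      have e1 := Complex.normSq_apply w
      have e2 := Complex.normSq_apply (1 - w)
      simp only [Complex.sub_re, Complex.sub_im, Complex.one_re, Complex.one_im] at e2
      nlinarith [hnsq, e1, e2]
    apply Complex.ext
    · simp [Complex.conj_re, hre]; norm_num
    · simp [Complex.conj_im]
  obtain ⟨hzc, hzt⟩ := key z hz1 hz2
  have ha0 : (a:ℂ) ≠ 0 := by
    intro h
    rw [h] at hzt
    have : z ^ (n-1) = 0 := by rw [hzt]; simp [zero_pow hn0]
    have hz0 : z = 0 := pow_eq_zero_iff hn1 |>.mp this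
    rw [hz0] at hzc
    simp at hzc
  have hz0 : z ≠ 0 := by
    intro h
    rw [h] at hzt
    rw [zero_pow hn1] at hzt
    exact ha0 (pow_eq_zero_iff hn0 |>.mp (by linear_combination hzt))
  have hzc0 : (starRingEnd ℂ) z ≠ 0 := by
    simpa using hz0
  -- rationality of m := z * conj z
  have haev : Polynomial.aeval z K = 0 := by
    rw [Polynomial.aeval_def, ← Polynomial.eval_map]
    exact hz1
  have hzint : IsIntegral ℚ z := (IsAlgebraic.isIntegral ⟨K, hK0, haev⟩)
  set p : ℚ[X] := minpoly ℚ z with hpdef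
  have hpK : p ∣ K := minpoly.dvd ℚ z haev
  have hpK' : p ∣ derivative K := by
    apply minpoly.dvd ℚ z
    rw [Polynomial.aeval_def, ← Polynomial.eval_map, ← Polynomial.derivative_map]
    exact hz2
  have hroot : ∀ w : ℂ, (p.map (algebraMap ℚ ℂ)).IsRoot w →
      (starRingEnd ℂ) w = 1 - w ∧ w * (starRingEnd ℂ) w = z * (starRingEnd ℂ) z := by
    intro w hw
    have hw1 : eval w KC = 0 := by
      obtain ⟨c, hc⟩ := Polynomial.map_dvd (algebraMap ℚ ℂ) hpK
      rw [← hKCdef] at hc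
      rw [hc, eval_mul, hw, zero_mul]
    have hw2 : eval w (derivative KC) = 0 := by
      obtain ⟨c, hc⟩ := Polynomial.map_dvd (algebraMap ℚ ℂ) hpK'
      rw [← Polynomial.derivative_map] at hc
      rw [← hKCdef] at hc
      rw [hc, eval_mul, hw, zero_mul]
    obtain ⟨hwc, hwt⟩ := key w hw1 hw2
    refine ⟨hwc, ?_⟩
    have e1 : (w * (starRingEnd ℂ) w) ^ (n-1) = ((a:ℂ) ^ n) ^ 2 := by
      rw [mul_pow, hwt, ← map_pow, hwt]
      simp [map_pow]
      ring
    have e2 : (z * (starRingEnd ℂ) z) ^ (n-1) = ((a:ℂ) ^ n) ^ 2 := by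
      rw [mul_pow, hzt, ← map_pow, hzt]
      simp [map_pow]
      ring
    have e3 : ((Complex.normSq w : ℝ) : ℂ) ^ (n-1) = ((Complex.normSq z : ℝ) : ℂ) ^ (n-1) := by
      rw [Complex.mul_conj] at e1 e2
      rw [e1, e2]
    have e4 : (Complex.normSq w) ^ (n-1) = (Complex.normSq z) ^ (n-1) := by
      exact_mod_cast e3
    have e5 : Complex.normSq w = Complex.normSq z :=
      (pow_left_inj₀ (Complex.normSq_nonneg _) (Complex.normSq_nonneg _) hn1).mp e4
    rw [Complex.mul_conj, Complex.mul_conj, e5]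
  -- degree bound
  have hdeg2 : p.natDegree ≤ 2 := by
    set q : ℂ[X] := X ^ 2 - X + C (z * (starRingEnd ℂ) z) with hqdef
    have hqdeg : q.natDegree = 2 := by
      rw [hqdef]
      compute_degree!
    have hq0 : q ≠ 0 := fun h => by simp [h] at hqdeg
    have hsplits : Splits (p.map (algebraMap ℚ ℂ)) := IsAlgClosed.splits _
    have hsep : p.Separable := (minpoly.irreducible hzint).separable
    have hnodup : (p.map (algebraMap ℚ ℂ)).roots.Nodup := nodup_roots hsep.map
    have hpm0 : p.map (algebraMap ℚ ℂ) ≠ 0 :=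
      Polynomial.map_ne_zero (minpoly.ne_zero hzint)
    have hsub : (p.map (algebraMap ℚ ℂ)).roots.toFinset ⊆ q.roots.toFinset := by
      intro w hw
      rw [Multiset.mem_toFinset, mem_roots hpm0] at hw
      obtain ⟨hwc, hwm⟩ := hroot w hw
      rw [Multiset.mem_toFinset, mem_roots hq0]
      show eval w q = 0
      rw [hqdef]
      simp only [eval_add, eval_sub, eval_pow, eval_X, eval_C]
      rw [← hwm, hwc]
      ring
    calc p.natDegree = Multiset.card (p.map (algebraMap ℚ ℂ)).roots :=
          by rw [← hsplits.natDegree_eq_card_roots, natDegree_map]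
      _ = (p.map (algebraMap ℚ ℂ)).roots.toFinset.card :=
          (Multiset.toFinset_card_of_nodup hnodup).symm
      _ ≤ q.roots.toFinset.card := Finset.card_le_card hsub
      _ ≤ Multiset.card q.roots := Multiset.toFinset_card_le _
      _ ≤ q.natDegree := q.card_roots'
      _ = 2 := hqdeg
  -- obtain rational m
  have hzq : z ^ 2 = z - z * (starRingEnd ℂ) z := by
    rw [hzc]
    ring
  have hm : ∃ r : ℚ, (r : ℂ) = z * (starRingEnd ℂ) z := by
    have hlt : p.natDegree < 3 := by omega
    have hsum := Polynomial.aeval_eq_sum_range' hlt z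
    rw [minpoly.aeval] at hsum
    rw [Finset.sum_range_succ, Finset.sum_range_succ, Finset.sum_range_succ,
      Finset.sum_range_zero] at hsum
    simp only [Rat.smul_def, pow_zero, mul_one, pow_one] at hsum
    have h0 : (p.coeff 0 : ℂ) + (p.coeff 1 : ℂ) * z + (p.coeff 2 : ℂ) * z ^ 2 = 0 := by
      linear_combination -hsum
    rw [hzq] at h0
    -- (c0 - c2 * m) + (c1 + c2) * z = 0
    by_cases hc : p.coeff 1 + p.coeff 2 = 0
    · have hcc : (p.coeff 1 : ℂ) = -(p.coeff 2 : ℂ) := by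
        have h' : ((p.coeff 1 + p.coeff 2 : ℚ) : ℂ) = ((0:ℚ) : ℂ) := by rw [hc]
        push_cast at h'
        linear_combination h'
      by_cases h2 : p.coeff 2 = 0
      · exfalso
        have h1 : p.coeff 1 = 0 := by
          have : (p.coeff 1 : ℂ) = 0 := by rw [hcc, h2]; simp
          exact_mod_cast this
        have h00 : p.coeff 0 = 0 := by
          have : (p.coeff 0 : ℂ) = 0 := by
            rw [h2] at hcc
            simp at hcc
            rw [hcc] at h0
            push_cast [h2] at h0
            linear_combination h0
          exact_mod_cast this
        apply minpoly.ne_zero hzint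
        rw [← hpdef]
        ext i
        match i with
        | 0 => simpa using h00
        | 1 => simpa using h1
        | 2 => simpa using h2
        | (k+3) => simp [coeff_eq_zero_of_natDegree_lt (by omega : p.natDegree < k+3)]
      · refine ⟨p.coeff 0 / p.coeff 2, ?_⟩
        have hc2 : (p.coeff 2 : ℂ) ≠ 0 := by exact_mod_cast h2
        rw [hcc] at h0
        push_cast
        rw [div_eq_iff hc2]
        linear_combination h0
    · have hcc : ((p.coeff 1 + p.coeff 2 : ℚ) : ℂ) ≠ 0 := by
        intro h
        exact hc (by exact_mod_cast h)
      push_cast at hcc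
      have hconj := congrArg (starRingEnd ℂ) h0
      simp only [map_add, map_mul, map_sub, map_one, Complex.conj_conj, map_ratCast, map_zero] at hconj
      have hzz : z = (starRingEnd ℂ) z := by
        have hdiff : ((p.coeff 1 : ℂ) + (p.coeff 2 : ℂ)) * (z - (starRingEnd ℂ) z) = 0 := by
          linear_combination h0 - hconj
        rcases mul_eq_zero.mp hdiff with h | h
        · exact absurd h hcc
        · linear_combination sub_eq_zero.mp h
      have hz12 : z = 1/2 := by
        rw [← hzz] at hzc
        linear_combination hzc / 2
      refine ⟨1/4, ?_⟩
      rw [← hzz, hz12]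
      norm_num
  obtain ⟨r, hr⟩ := hm
  have hct : ((starRingEnd ℂ) z) ^ (n-1) = -(a:ℂ) ^ n := by
    rw [← map_pow, hzt]
    simp
  have hrpow : (r:ℂ) ^ (n-1) = (a:ℂ) ^ (2*n) := by
    rw [hr, mul_pow, hzt, hct]
    rw [pow_mul]
    ring
  have hrq : r ^ (n-1) = a ^ (2*n) := by exact_mod_cast hrpow
  have hr0' : r ≠ 0 := by
    intro h
    rw [h] at hr
    have : z * (starRingEnd ℂ) z = 0 := by exact_mod_cast hr.symm
    rcases mul_eq_zero.mp this with h' | h'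
    exacts [hz0 h', hzc0 h']
  have hrR : (r:ℝ) = Complex.normSq z := by
    have : ((r:ℝ):ℂ) = ((Complex.normSq z : ℝ) : ℂ) := by
      rw [← Complex.mul_conj, ← hr]
      push_cast
      ring
    exact_mod_cast this
  have hrpos : 0 < r := by
    rcases lt_or_eq_of_le (Complex.normSq_nonneg z) with h | h
    · have : (0:ℝ) < (r:ℝ) := by rw [hrR]; exact h
      exact_mod_cast this
    · exfalso
      exact hz0 (Complex.normSq_eq_zero.mp h.symm)
  set β : ℂ := z / (starRingEnd ℂ) z with hβdef
  have hβ : β ^ (n-1) = 1 := by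
    rw [hβdef, div_pow, hzt, hct]
    apply div_self
    intro h
    exact ha0 (pow_eq_zero_iff hn0 |>.mp (by linear_combination -h))
  have hβ0 : β ≠ 0 := div_ne_zero hz0 hzc0
  have hβint : IsIntegral ℤ β := by
    refine ⟨X ^ (n-1) - C 1, monic_X_pow_sub_C 1 hn1, ?_⟩
    simp [eval₂_sub, eval₂_pow, hβ]
  have hβinv : β⁻¹ = β ^ (n-2) := by
    have h1 : β * β ^ (n-2) = 1 := by
      rw [← pow_succ']
      rw [show n - 2 + 1 = n - 1 by omega]
      exact hβ
    exact inv_eq_of_mul_eq_one_right h1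
  have hcint : IsIntegral ℤ (β + β⁻¹) := by
    rw [hβinv]
    exact hβint.add (hβint.pow _)
  set γ : ℚ := (1 - 2*r)/r with hγdef
  have hγ : (γ:ℂ) = β + β⁻¹ := by
    have hsum : β + β⁻¹ = (z^2 + ((starRingEnd ℂ) z)^2) / (z * (starRingEnd ℂ) z) := by
      rw [hβdef]
      field_simp
    have hnum : z^2 + ((starRingEnd ℂ) z)^2 = 1 - 2*(r:ℂ) := by
      linear_combination (z + (starRingEnd ℂ) z + 1) * hzc + 2 * hr
    rw [hsum, hnum, ← hr, hγdef]
    push_cast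
    ring
  have hγint : IsIntegral ℤ γ := by
    have h1 : IsIntegral ℤ ((γ:ℚ):ℂ) := by rw [hγ]; exact hcint
    rw [← eq_ratCast (algebraMap ℚ ℂ) γ] at h1
    exact (isIntegral_algebraMap_iff (algebraMap ℚ ℂ).injective).mp h1
  obtain ⟨k, hk⟩ := IsIntegrallyClosed.isIntegral_iff.mp hγint
  have hkq : (k:ℚ) = γ := by rw [← hk]; rfl
  -- bound on γ
  have hβabs : ‖β‖ = 1 := by
    rw [hβdef, norm_div, Complex.norm_conj]
    exact div_self (by simpa using hz0)
  have hβconj : β⁻¹ = (starRingEnd ℂ) β := by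
    rw [Complex.inv_def, Complex.normSq_eq_norm_sq, hβabs]
    simp
  have hγabs : |γ| ≤ 2 := by
    have h1 : (γ:ℂ) = ((2 * β.re : ℝ) : ℂ) := by rw [hγ, hβconj, Complex.add_conj]
    have h2 : ((γ:ℝ):ℂ) = ((2 * β.re : ℝ) : ℂ) := by rw [← h1]; push_cast; ring
    have h3 : (γ:ℝ) = 2 * β.re := by exact_mod_cast h2
    have h4 : |β.re| ≤ 1 := by
      have := Complex.abs_re_le_norm β
      rwa [hβabs] at this
    have h5 : |(γ:ℝ)| ≤ 2 := by
      rw [h3, abs_mul]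
      rw [abs_of_nonneg (by norm_num : (0:ℝ) ≤ 2)]
      linarith
    have h6 : |(γ:ℝ)| = ((|γ| : ℚ) : ℝ) := by rw [Rat.cast_abs]
    rw [h6] at h5
    exact_mod_cast h5
  have hγr : γ * r = 1 - 2*r := by
    rw [hγdef]
    field_simp
  have hk2 : -2 ≤ k ∧ k ≤ 2 := by
    have := abs_le.mp hγabs
    rw [← hkq] at this
    constructor <;> [exact_mod_cast this.1; exact_mod_cast this.2]
  rw [← hkq] at hγr
  haveI : Fact (Nat.Prime 2) := ⟨by norm_num⟩
  haveI : Fact (Nat.Prime 3) := ⟨by norm_num⟩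
  have h2n : (2:ℚ)^n = 2 * 2^(n-1) := by
    rw [← pow_succ']
    congr 1
    omega
  have h3n : (3:ℚ)^n = 3 * 3^(n-1) := by
    rw [← pow_succ']
    congr 1
    omega
  have h4n : (4:ℚ)^n = 4 * 4^(n-1) := by
    rw [← pow_succ']
    congr 1
    omega
  obtain ⟨hk1, hk2⟩ := hk2
  interval_cases k
  · -- k = -2 : 0 = 1
    push_cast at hγr
    linarith
  · -- k = -1 : r = 1, a^2 = 1
    have hr1 : r = 1 := by push_cast at hγr; linarith
    rw [hr1, one_pow] at hrq
    have h1 : (a^2)^n = 1^n := by rw [one_pow, ← pow_mul]; exact hrq.symm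
    have h2 : a^2 = 1 := (pow_left_inj₀ (sq_nonneg a) zero_le_one hn0).mp h1
    have h3 : (a - 1) * (a + 1) = 0 := by linear_combination h2
    rcases mul_eq_zero.mp h3 with h | h
    · exact ha1 (by linarith)
    · exact ha2 (by linarith)
  · -- k = 0 : r = 1/2
    have hr1 : r = 1/2 := by push_cast at hγr; linarith
    rw [hr1] at hrq
    have h1 : (2*a^2)^n = ((2:ℕ):ℚ) := by
      rw [mul_pow, ← pow_mul, ← hrq, h2n]
      rw [div_pow, one_pow]
      push_cast
      field_simp
    exact aux_prime_pow 2 hn h1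
  · -- k = 1 : r = 1/3
    have hr1 : r = 1/3 := by push_cast at hγr; linarith
    rw [hr1] at hrq
    have h1 : (3*a^2)^n = ((3:ℕ):ℚ) := by
      rw [mul_pow, ← pow_mul, ← hrq, h3n]
      rw [div_pow, one_pow]
      push_cast
      field_simp
    exact aux_prime_pow 3 hn h1
  · -- k = 2 : r = 1/4
    have hr1 : r = 1/4 := by push_cast at hγr; linarith
    rw [hr1] at hrq
    have h1 : ((2*|a|)^n)^2 = ((4:ℕ):ℚ) := by
      rw [← pow_mul, mul_comm n 2, pow_mul, mul_pow]
      have : |a|^2 = a^2 := sq_abs a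
      rw [this]
      have : ((2:ℚ)^2)^n = (4:ℚ)^n := by norm_num
      calc ((2:ℚ)^2 * a^2)^n = ((2:ℚ)^2)^n * (a^2)^n := mul_pow _ _ n
        _ = (4:ℚ)^n * a^(2*n) := by rw [this, ← pow_mul]
        _ = (4:ℚ)^n * (1/4)^(n-1) := by rw [← hrq]
        _ = ((4:ℕ):ℚ) := by
            rw [h4n, div_pow, one_pow]
            push_cast
            field_simp
    have h2 : (2*|a|)^n = ((2:ℕ):ℚ) := by
      have hnn : (0:ℚ) ≤ (2*|a|)^n := by positivity
      have h4 : ((2*|a|)^n)^2 = (((2:ℕ):ℚ))^2 := by rw [h1]; norm_num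
      exact (pow_left_inj₀ hnn (by norm_num) (by norm_num)).mp h4
    exact aux_prime_pow 2 hn h2
end

section
/- For odd n ≥ 3, the polynomial K_{1,n}(x) = x^n + (1-x)^n + 1 is square-free over ℚ. -/
open Polynomial in
private lemma aux_abs_one {x : ℝ} (hx : 0 ≤ x) {k : ℕ} (hk : k ≠ 0) (h : x ^ k = 1) :
    x = 1 := by
  rcases lt_trichotomy x 1 with h1 | h1 | h1
  · have := pow_lt_one₀ hx h1 hk
    simp [h] at this
  · exact h1
  · have := one_lt_pow₀ h1 hk
    simp [h] at this

open Polynomial in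
theorem stmt_12 (n : ℕ) (hn : 3 ≤ n) (hodd : Odd n) :
    Squarefree (X ^ n + (1 - X) ^ n + 1 : ℚ[X]) := by
  rw [← PerfectField.separable_iff_squarefree]
  rw [Polynomial.separable_def]
  have hn0 : n ≠ 0 := by omega
  have hn1 : n - 1 + 1 = n := by omega
  have hn1ne : n - 1 ≠ 0 := by omega
  have heven : Even (n - 1) := Nat.Odd.sub_odd hodd odd_one
  have hd : derivative (X ^ n + (1 - X) ^ n + 1 : ℚ[X])
      = C (n : ℚ) * (X ^ (n - 1) - (1 - X) ^ (n - 1)) := by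
    simp [derivative_pow]
    ring
  rw [hd, Polynomial.isCoprime_iff_aeval_ne_zero_of_isAlgClosed (k := ℚ) ℂ]
  intro a
  by_contra hcon
  push_neg at hcon
  obtain ⟨hp, hq⟩ := hcon
  simp only [map_add, map_pow, map_sub, map_one, map_mul, aeval_X, aeval_C, map_ofNat] at hp hq
  -- from hq : n * (a^(n-1) - (1-a)^(n-1)) = 0
  have hnC : ((n : ℚ) : ℂ) ≠ 0 := by
    simp [Rat.cast_natCast, hn0]
  have heq : a ^ (n - 1) = (1 - a) ^ (n - 1) := by
    have := mul_eq_zero.mp hq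
    rcases this with h | h
    · exact absurd h hnC
    · linear_combination h
  -- from hp : a^n + (1-a)^n + 1 = 0, rewrite a^n = a * a^(n-1)
  have hpow : ∀ b : ℂ, b ^ n = b * b ^ (n - 1) := fun b => by
    conv_lhs => rw [← hn1, pow_succ']
  rw [hpow a, hpow (1 - a)] at hp
  have ht : a ^ (n - 1) = -1 := by
    have : (a + (1 - a)) * a ^ (n - 1) + 1 = 0 := by
      rw [add_mul]
      linear_combination hp + (1 - a) * heq
    simp at this
    linear_combination this
  have ht' : (1 - a) ^ (n - 1) = -1 := heq ▸ ht
  -- moduli are 1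
  have habs : ∀ b : ℂ, b ^ (n - 1) = -1 → b * (starRingEnd ℂ) b = 1 := by
    intro b hb
    have h1 : ‖b‖ ^ (n - 1) = 1 := by
      rw [← norm_pow, hb]
      simp
    have h2 : ‖b‖ = 1 := aux_abs_one (norm_nonneg b) hn1ne h1
    rw [Complex.mul_conj, Complex.normSq_eq_norm_sq, h2]
    norm_num
  have h1 := habs a ht
  have h2 := habs (1 - a) ht'
  rw [map_sub, map_one] at h2
  set c := (starRingEnd ℂ) a with hc
  have hq2 : a ^ 2 - a + 1 = 0 := by linear_combination (a - 1) * h1 - a * h2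
  have h3 : a ^ 3 = -1 := by linear_combination (a + 1) * hq2
  have hA : a ^ (3 * (n - 1)) = -1 := by
    rw [mul_comm, pow_mul, ht]
    norm_num
  have hB : a ^ (3 * (n - 1)) = 1 := by
    rw [pow_mul, h3, heven.neg_one_pow]
  rw [hA] at hB
  norm_num at hB
end

section
/- For a = 1/2 or a = -1/2 and any integer n ≥ 2, the polynomial K_{a,n}(x) = x^n + (1-x)^n + a^n is irreducible over ℚ. -/
open Polynomial Finset

private lemma rev_irred {F : Type*} [Field F] {p : F[X]} (h0 : p.coeff 0 ≠ 0)
    (h : Irreducible p.reverse) : Irreducible p := by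
  constructor
  · intro hu
    obtain ⟨r, hr, hrp⟩ := Polynomial.isUnit_iff.mp hu
    exact h.not_isUnit (by rw [← hrp, reverse_C]; exact isUnit_C.mpr hr)
  · intro f g hfg
    have hrev : p.reverse = f.reverse * g.reverse := by
      rw [hfg, reverse_mul_of_domain]
    have hf0 : f.coeff 0 ≠ 0 := fun hc => h0 (by rw [hfg, mul_coeff_zero, hc, zero_mul])
    have hg0 : g.coeff 0 ≠ 0 := fun hc => h0 (by rw [hfg, mul_coeff_zero, hc, mul_zero])
    have key : ∀ q : F[X], q.coeff 0 ≠ 0 → IsUnit q.reverse → IsUnit q := by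
      intro q hq hu
      have h1 : q.reverse.natDegree = 0 := natDegree_eq_zero_of_isUnit hu
      have h2 : q.natTrailingDegree = 0 := natTrailingDegree_eq_zero.mpr (Or.inr hq)
      have h3 : q.natDegree = 0 := by
        have h4 := natDegree_eq_reverse_natDegree_add_natTrailingDegree q
        omega
      rw [eq_C_of_natDegree_eq_zero h3]
      exact isUnit_C.mpr (isUnit_iff_ne_zero.mpr hq)
    rcases h.isUnit_or_isUnit hrev with hf | hg
    · exact Or.inl (key f hf0 hf)
    · exact Or.inr (key g hg0 hg)

private lemma main_aux {n m : ℕ} (hm : 0 < m) (Sz : ℤ[X])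
    (hmap : Sz.map (Int.castRingHom (ZMod 2)) = X ^ m)
    (hSdeg : Sz.natDegree ≤ m)
    (hc0 : ¬ (4:ℤ) ∣ Sz.coeff 0)
    (K : ℚ[X]) (hK0 : K.coeff 0 ≠ 0) (hKdeg : K.natDegree = m)
    (heval : ∀ y : ℚ, y ≠ 0 → (2:ℚ)^n * y^m * Polynomial.eval (2*y)⁻¹ K
      = Polynomial.eval y (Sz.map (Int.castRingHom ℚ))) :
    Irreducible K := by
  have hcoeffmod : ∀ k : ℕ, ((Sz.coeff k : ZMod 2)) = (X ^ m : (ZMod 2)[X]).coeff k := by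
    intro k
    rw [← hmap, coeff_map]
    rfl
  have h2 : ∀ k, k < m → (2:ℤ) ∣ Sz.coeff k := by
    intro k hk
    have := hcoeffmod k
    rw [coeff_X_pow, if_neg (by omega)] at this
    exact_mod_cast (ZMod.intCast_zmod_eq_zero_iff_dvd _ 2).mp this
  have hlead' : ¬ (2:ℤ) ∣ Sz.coeff m := by
    intro hdvd
    have := hcoeffmod m
    rw [coeff_X_pow, if_pos rfl] at this
    rw [(ZMod.intCast_zmod_eq_zero_iff_dvd _ 2).mpr (by exact_mod_cast hdvd)] at this
    simp at this
  have hdeg : Sz.natDegree = m := by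
    refine le_antisymm hSdeg ?_
    have h5 : (Sz.map (Int.castRingHom (ZMod 2))).natDegree ≤ Sz.natDegree := natDegree_map_le
    rw [hmap, natDegree_X_pow] at h5
    exact h5
  set c := Sz.content with hc
  have hc2 : ¬ (2:ℤ) ∣ c := fun h => hlead' (h.trans (content_dvd_coeff m))
  have hcne : c ≠ 0 := fun h => hc2 (h ▸ dvd_zero 2)
  set P := Sz.primPart with hPdef
  have hSP : Sz = C c * P := Sz.eq_C_content_mul_primPart
  have hPdeg : P.natDegree = m := (natDegree_primPart Sz).trans hdeg
  have hPco : ∀ k, Sz.coeff k = c * P.coeff k := by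
    intro k; conv_lhs => rw [hSP]
    rw [coeff_C_mul]
  have hEis : P.IsEisensteinAt (Ideal.span {(2:ℤ)}) := by
    constructor
    · rw [Ideal.mem_span_singleton, leadingCoeff, hPdeg]
      exact fun hdvd => hlead' (by rw [hPco m]; exact Dvd.dvd.mul_left hdvd c)
    · intro k hk
      rw [Ideal.mem_span_singleton]
      have hd := h2 k (hPdeg ▸ hk)
      rw [hPco k] at hd
      exact (Int.prime_two.dvd_mul.mp hd).resolve_left hc2
    · rw [Ideal.span_singleton_pow, Ideal.mem_span_singleton]
      intro h4
      exact hc0 (by rw [hPco 0]; exact Dvd.dvd.mul_left (by norm_num at h4 ⊢; exact h4) c)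
  have hPirr : Irreducible P :=
    hEis.irreducible ((Ideal.span_singleton_prime (by norm_num)).mpr Int.prime_two)
      (isPrimitive_primPart Sz) (by omega)
  have hPQirr : Irreducible (P.map (Int.castRingHom ℚ)) :=
    (IsPrimitive.Int.irreducible_iff_irreducible_map_cast (isPrimitive_primPart Sz)).mp hPirr
  have hSq : Sz.map (Int.castRingHom ℚ) = C (c:ℚ) * P.map (Int.castRingHom ℚ) := by
    conv_lhs => rw [hSP]
    rw [Polynomial.map_mul, map_C]
    rfl
  have hSqirr : Irreducible (Sz.map (Int.castRingHom ℚ)) := by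
    rw [hSq]
    exact (irreducible_isUnit_mul
      (isUnit_C.mpr (isUnit_iff_ne_zero.mpr (Int.cast_ne_zero.mpr hcne)))).mpr hPQirr
  -- relate to K
  have hrel : (K.reverse).comp (C (2:ℚ) * X + C 0)
      = C ((2:ℚ)^m / 2^n) * Sz.map (Int.castRingHom ℚ) := by
    apply eq_of_infinite_eval_eq
    apply Set.Infinite.mono (s := ({0}ᶜ : Set ℚ))
    swap
    · exact (Set.finite_singleton 0).infinite_compl
    intro y hy
    have hy' : y ≠ 0 := hy
    have h2y : (2:ℚ)*y ≠ 0 := mul_ne_zero two_ne_zero hy'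
    have h2yi : ((2:ℚ)*y)⁻¹ ≠ 0 := inv_ne_zero h2y
    letI : Invertible ((2:ℚ)*y)⁻¹ := invertibleOfNonzero h2yi
    have hrev := eval₂_reverse_mul_pow (RingHom.id ℚ) ((2*y)⁻¹) K
    rw [invOf_eq_inv _, inv_inv, hKdeg] at hrev
    have hrev' : eval (2*y) K.reverse * ((2*y)⁻¹) ^ m = eval (2*y)⁻¹ K := hrev
    simp only [Set.mem_setOf_eq, eval_comp, eval_add, eval_mul, eval_C, eval_X, add_zero,
      eval_mul]
    rw [show (2:ℚ) * y = 2*y from rfl]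
    have hpow : ((2*y)⁻¹)^m * (2*y)^m = 1 := by
      rw [← mul_pow, inv_mul_cancel₀ h2y, one_pow]
    have : eval (2*y) K.reverse = (2*y)^m * eval (2*y)⁻¹ K := by
      linear_combination (2*y)^m * hrev' - eval (2*y) K.reverse * hpow
    rw [this, ← heval y hy']
    rw [mul_pow]
    field_simp
  have hcomp : Irreducible ((K.reverse).comp (C (2:ℚ) * X + C 0)) := by
    rw [hrel]
    refine (irreducible_isUnit_mul (isUnit_C.mpr (isUnit_iff_ne_zero.mpr ?_))).mpr hSqirr
    positivity
  letI : Invertible (2:ℚ) := invertibleOfNonzero two_ne_zero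
  have hrevirr : Irreducible K.reverse := by
    have happ : (algEquivCMulXAddC (2:ℚ) 0) K.reverse = (K.reverse).comp (C (2:ℚ) * X + C 0) := by
      simp [algEquivCMulXAddC_apply, aeval_def, eval₂_eq_eval_map, comp]
    exact (MulEquiv.irreducible_iff (M := ℚ[X]) (algEquivCMulXAddC (2:ℚ) 0)
      (x := K.reverse)).mp (happ ▸ hcomp)
  exact rev_irred hK0 hrevirr

open Polynomial in
theorem stmt_13 (a : ℚ) (ha : a = 1 / 2 ∨ a = -(1 / 2)) (n : ℕ) (hn : 2 ≤ n) :
    Irreducible (X ^ n + (1 - X) ^ n + C (a ^ n) : ℚ[X]) := by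
  obtain ⟨ε, hεQ, hε1⟩ : ∃ ε : ℤ, ((ε:ℚ) = (2*a)^n ∧ (ε = 1 ∨ ε = -1)) := by
    rcases ha with h | h <;> subst h
    · exact ⟨1, by norm_num, Or.inl rfl⟩
    · refine ⟨(-1)^n, ?_, ?_⟩
      · push_cast; norm_num
      · rcases Nat.even_or_odd n with he | ho
        · exact Or.inl he.neg_one_pow
        · exact Or.inr ho.neg_one_pow
  have h2b : (2:ℚ)^n * a^n = (ε:ℚ) := by rw [hεQ, mul_pow]
  have h4n : (4:ℚ) ≤ 2^n := by
    calc (4:ℚ) = 2^2 := by norm_num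
    _ ≤ 2^n := pow_le_pow_right₀ one_le_two hn
  have hεabs : (ε:ℚ) = 1 ∨ (ε:ℚ) = -1 := by
    rcases hε1 with h | h <;> [left; right] <;> rw [h] <;> norm_num
  have hb0 : (1:ℚ) + a^n ≠ 0 := by
    intro h
    have hb' : a^n = -1 := by linarith
    rw [hb'] at h2b
    rcases hεabs with h1 | h1 <;> rw [h1] at h2b <;> nlinarith
  have hK0 : (X ^ n + (1 - X) ^ n + C (a^n) : ℚ[X]).coeff 0 ≠ 0 := by
    rw [coeff_zero_eq_eval_zero]
    simp only [eval_add, eval_pow, eval_X, eval_sub, eval_one, eval_C, sub_zero, one_pow]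
    rw [zero_pow (by omega : n ≠ 0)]
    intro h
    exact hb0 (by linarith [h])
  rcases Nat.even_or_odd n with hpar | hpar
  · -- n even, m = n
    have hεone : (ε:ℚ) = 1 := by
      rcases hεabs with h1 | h1
      · exact h1
      · exfalso
        have h0 : (0:ℚ) ≤ (2*a)^n := hpar.pow_nonneg _
        rw [← hεQ, h1] at h0; linarith
    set Sz : ℤ[X] := (C 2 * X - 1)^n + X^n + 1 with hSz
    have hone : ((1:(ZMod 2)[X]) + 1) = 0 := by
      rw [← C_1, ← C_add]
      norm_num
      exact (by decide : (1:ZMod 2)+1 = 0)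
    apply main_aux (n := n) (m := n) (by omega) Sz ?_ ?_ ?_ _ hK0 ?_ ?_
    · -- hmap
      rw [hSz]
      simp only [Polynomial.map_add, Polynomial.map_pow, Polynomial.map_sub,
        Polynomial.map_mul, Polynomial.map_one, map_C, map_X]
      rw [show ((Int.castRingHom (ZMod 2)) (2:ℤ)) = 0 by decide]
      simp only [map_zero, zero_mul, zero_sub]
      rw [hpar.neg_one_pow]
      linear_combination hone
    · -- degree
      rw [hSz]
      compute_degree
    · -- coeff 0
      rw [hSz, coeff_zero_eq_eval_zero]
      simp only [eval_add, eval_pow, eval_sub, eval_mul, eval_C, eval_X, eval_one,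
        mul_zero, zero_sub]
      rw [hpar.neg_one_pow, zero_pow (by omega : n ≠ 0)]
      decide
    · -- K natDegree
      have hco : (X ^ n + (1 - X) ^ n + C (a^n) : ℚ[X]).coeff n = 2 := by
        have hsub : ((1 - X : ℚ[X]))^n = C ((-1:ℚ)^n) * (X + C (-1))^n := by
          rw [C_pow, ← mul_pow]
          congr 1
          simp only [map_neg, map_one]
          ring
        rw [coeff_add, coeff_add, coeff_X_pow, if_pos rfl, hsub, coeff_C_mul,
          coeff_X_add_C_pow, coeff_C, if_neg (by omega : n ≠ 0)]
        simp [hpar.neg_one_pow]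
        norm_num
      refine le_antisymm ?_ (le_natDegree_of_ne_zero (by rw [hco]; norm_num))
      compute_degree
    · -- heval
      intro y hy
      have h2y : (2:ℚ)*y ≠ 0 := mul_ne_zero two_ne_zero hy
      have hbval : a^n = ((2:ℚ)^n)⁻¹ := by
        rw [hεone] at h2b
        field_simp at h2b ⊢
        linarith
      rw [hSz]
      simp only [Polynomial.map_add, Polynomial.map_pow, Polynomial.map_sub,
        Polynomial.map_mul, Polynomial.map_one, map_C, map_X, eval_add, eval_pow,
        eval_sub, eval_mul, eval_C, eval_X, eval_one]
      rw [hbval]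
      have e2 : ((2:ℚ)*y) * ((2*y)⁻¹) = 1 := mul_inv_cancel₀ h2y
      have e3 : (1 - (2*y)⁻¹) * (2*y) = 2*y - 1 := by field_simp
      have e4 : ((2:ℚ))^n ≠ 0 := by positivity
      have h6 : ((2*y)*(2*y)⁻¹)^n = (1:ℚ) := by rw [e2, one_pow]
      have h7 : ((1 - (2*y)⁻¹) * (2*y))^n = (2*y-1:ℚ)^n := by rw [e3]
      have h8 : (2:ℚ)^n * (2^n)⁻¹ = 1 := mul_inv_cancel₀ e4
      simp only [eq_intCast, Int.cast_ofNat]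
      rw [← mul_pow, mul_add, mul_add, ← mul_pow, ← mul_pow, e2, one_pow,
        mul_comm (2*y) (1 - (2*y)⁻¹), e3, mul_pow, mul_comm ((2:ℚ)^n) (y^n), mul_assoc, h8, mul_one]
      ring
  · -- n odd, m = n - 1
    have hn1 : n - 1 + 1 = n := by omega
    have hpar1 : Even (n - 1) := by
      obtain ⟨k, hk⟩ := hpar; exact ⟨k, by omega⟩
    set T : ℤ[X] := ∑ i ∈ range n, (C 2 * X - 1)^i * (-1)^(n-1-i) with hT
    set Sz : ℤ[X] := C 2 * T + C ε * X^(n-1) with hSz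
    have hgeom := geom_sum₂_mul (R := ℤ[X]) (C 2 * X - 1) (-1) n
    rw [sub_neg_eq_add, sub_add_cancel, hpar.neg_one_pow, sub_neg_eq_add] at hgeom
    have hTkey : T * (C 2 * X) = (C 2 * X - 1)^n + 1 := hgeom
    have hpows : (X:ℤ[X])^(n-1) * X = X^n := by rw [← pow_succ, hn1]
    have hXSz : X * Sz = (C 2 * X - 1)^n + C ε * X^n + 1 := by
      rw [hSz]
      linear_combination hTkey + C ε * hpows
    have hmap2 : Sz.map (Int.castRingHom (ZMod 2)) = X ^ (n-1) := by
      have h := congrArg (Polynomial.map (Int.castRingHom (ZMod 2))) hXSz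
      simp only [Polynomial.map_mul, Polynomial.map_add, Polynomial.map_pow,
        Polynomial.map_sub, Polynomial.map_one, map_X, map_C] at h
      rw [show ((Int.castRingHom (ZMod 2)) (2:ℤ)) = 0 by decide] at h
      rw [show ((Int.castRingHom (ZMod 2)) ε) = 1 by
        rcases hε1 with h1 | h1 <;> rw [h1] <;> decide] at h
      rw [map_zero, zero_mul, zero_sub, hpar.neg_one_pow, map_one, one_mul] at h
      have h' : (X:(ZMod 2)[X]) * Polynomial.map (Int.castRingHom (ZMod 2)) Sz
          = X * X^(n-1) := by
        rw [h, ← pow_succ', hn1]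
        ring
      exact mul_left_cancel₀ X_ne_zero h'
    have hSz0 : Sz ≠ 0 := by
      intro h0
      rw [h0, Polynomial.map_zero] at hmap2
      exact (pow_ne_zero (n-1) (X_ne_zero (R := ZMod 2))) hmap2.symm
    apply main_aux (n := n) (m := n - 1) (by omega) Sz hmap2 ?_ ?_ _ hK0 ?_ ?_
    · -- degree
      have hd : (X * Sz).natDegree = 1 + Sz.natDegree := by
        rw [natDegree_mul X_ne_zero hSz0, natDegree_X]
      have hdle : ((C 2 * X - 1 : ℤ[X])^n + C ε * X^n + 1).natDegree ≤ n := by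
        compute_degree
      rw [hXSz] at hd
      omega
    · -- coeff 0 = 2n
      have hc0' : Sz.coeff 0 = 2 * n := by
        rw [hSz, coeff_add, coeff_C_mul, coeff_C_mul, coeff_X_pow,
          if_neg (by omega : (0:ℕ) ≠ n - 1), mul_zero, add_zero,
          coeff_zero_eq_eval_zero, hT, eval_finset_sum]
        have hterm : ∀ i ∈ range n,
            Polynomial.eval 0 ((C 2 * X - 1:ℤ[X])^i * (-1)^(n-1-i)) = (-1:ℤ)^(n-1) := by
          intro i hi
          rw [mem_range] at hi
          simp only [eval_mul, eval_pow, eval_sub, eval_mul, eval_C, eval_X, eval_one,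
            eval_neg, mul_zero, zero_sub]
          rw [← pow_add]
          congr 1
          omega
        rw [Finset.sum_congr rfl hterm, Finset.sum_const, card_range, hpar1.neg_one_pow]
        simp
      rw [hc0']
      obtain ⟨k, hk⟩ := hpar
      omega
    · -- K natDegree = n - 1
      have hsub : ((1 - X : ℚ[X]))^n = C ((-1:ℚ)^n) * (X + C (-1))^n := by
        rw [C_pow, ← mul_pow]
        congr 1
        simp only [map_neg, map_one]
        ring
      have hcon : (X ^ n + (1 - X) ^ n + C (a^n) : ℚ[X]).coeff (n-1) = n := by
        rw [coeff_add, coeff_add, coeff_X_pow, if_neg (by omega : n - 1 ≠ n), hsub,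
          coeff_C_mul, coeff_X_add_C_pow, coeff_C, if_neg (by omega : n - 1 ≠ 0)]
        rw [show n - (n-1) = 1 by omega, pow_one,
          show n.choose (n-1) = n by
            rw [Nat.choose_symm (by omega : 1 ≤ n), Nat.choose_one_right] ]
        rw [hpar.neg_one_pow]
        push_cast
        ring
      have hcn : (X ^ n + (1 - X) ^ n + C (a^n) : ℚ[X]).coeff n = 0 := by
        rw [coeff_add, coeff_add, coeff_X_pow, if_pos rfl, hsub, coeff_C_mul,
          coeff_X_add_C_pow, coeff_C, if_neg (by omega : n ≠ 0)]
        rw [Nat.sub_self, pow_zero, one_mul, Nat.choose_self, hpar.neg_one_pow]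
        norm_num
      have hle : (X ^ n + (1 - X) ^ n + C (a^n) : ℚ[X]).natDegree ≤ n := by
        compute_degree
      have hlt : (X ^ n + (1 - X) ^ n + C (a^n) : ℚ[X]).natDegree ≤ n - 1 := by
        by_contra hcon2
        have hdn : (X ^ n + (1 - X) ^ n + C (a^n) : ℚ[X]).natDegree = n := by omega
        have hKne : (X ^ n + (1 - X) ^ n + C (a^n) : ℚ[X]) ≠ 0 :=
          fun h0 => hK0 (by rw [h0]; simp)
        exact Polynomial.leadingCoeff_ne_zero.mpr hKne (by rw [leadingCoeff, hdn]; exact hcn)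
      refine le_antisymm hlt (le_natDegree_of_ne_zero ?_)
      rw [hcon]
      exact Nat.cast_ne_zero.mpr (by omega)
    · -- heval
      intro y hy
      have h2y : (2:ℚ)*y ≠ 0 := mul_ne_zero two_ne_zero hy
      apply mul_left_cancel₀ hy
      have hq := congrArg (fun p => Polynomial.eval y (Polynomial.map (Int.castRingHom ℚ) p)) hXSz
      simp only [Polynomial.map_mul, Polynomial.map_add, Polynomial.map_pow,
        Polynomial.map_sub, Polynomial.map_one, map_X, map_C, eval_mul, eval_add, eval_pow,
        eval_sub, eval_C, eval_X, eval_one, eq_intCast] at hq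
      rw [show Polynomial.map (Int.castRingHom ℚ) ((2:ℤ):ℤ[X]) = C ((2:ℤ):ℚ) by
          rw [← C_eq_intCast, map_C]; rfl,
        show Polynomial.map (Int.castRingHom ℚ) (ε:ℤ[X]) = C (ε:ℚ) by
          rw [← C_eq_intCast, map_C]; rfl,
        eval_C, eval_C] at hq
      push_cast at hq
      rw [hq]
      have hbval : a^n = (ε:ℚ)/2^n := by
        rw [eq_div_iff (by positivity : ((2:ℚ)^n) ≠ 0), ← h2b]
        ring
      simp only [eval_add, eval_pow, eval_sub, eval_X, eval_one, eval_C]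
      rw [hbval]
      have hyp : y^(n-1) * y = y^n := by rw [← pow_succ, hn1]
      have e2 : ((2:ℚ)*y) * ((2*y)⁻¹) = 1 := mul_inv_cancel₀ h2y
      have e3 : (1 - (2*y)⁻¹) * (2*y) = 2*y - 1 := by field_simp
      have h8 : (2:ℚ)^n * (2^n)⁻¹ = 1 := mul_inv_cancel₀ (by positivity)
      rw [show ∀ Z : ℚ, y * (2^n * y^(n-1) * Z) = (2*y)^n * Z from fun Z => by
        rw [mul_pow, ← hyp]; ring]
      rw [mul_add, mul_add, ← mul_pow, ← mul_pow, e2, one_pow,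
        mul_comm (2*y) (1 - (2*y)⁻¹), e3, mul_pow, div_eq_mul_inv]
      linear_combination (y^n * (ε:ℚ)) * h8
end

section
/- Let L(x) = x^n + (2-x)^n + c ∈ ℤ[x] where c = ±1 and n ≥ 2. Then L is irreducible over ℤ. (Key step: the leading coefficient of L is 2 if n is even and 2n if n is odd; the reduction of L modulo 2 is the constant 1; hence any factorization must be trivial.) -/
open Polynomial

lemma coeff_two_sub_X_pow (n k : ℕ) :
    (((2 : ℤ[X]) - X) ^ n).coeff k = (-1)^n * ((-2 : ℤ))^(n-k) * (n.choose k : ℤ) := by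
  have : ((2 : ℤ[X]) - X) = -(X + C (-2)) := by simp; ring
  rw [this, neg_pow, mul_assoc, ← coeff_X_add_C_pow]
  rw [show ((-1:ℤ[X])^n) = C ((-1:ℤ)^n) by simp, coeff_C_mul]

open Polynomial in
theorem stmt_14 (c : ℤ) (hc : c = 1 ∨ c = -1) (n : ℕ) (hn : 2 ≤ n) :
    ¬ ∃ A B : ℤ[X], 0 < A.natDegree ∧ 0 < B.natDegree ∧
      X ^ n + (2 - X) ^ n + C c = A * B := by
  rintro ⟨A, B, hA, hB, hL⟩
  set f := Int.castRingHom (ZMod 2) with hf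
  set L : ℤ[X] := X ^ n + (2 - X) ^ n + C c with hLdef
  -- L mod 2 = 1
  have hmap : L.map f = 1 := by
    have h2 : ((2 : ℤ[X]).map f) = 0 := by
      rw [show (2:ℤ[X]) = C 2 by norm_num, map_C]
      exact C_eq_zero.mpr (by decide)
    have hcc : (f c) = 1 := by rcases hc with rfl | rfl <;> decide
    simp only [hLdef, Polynomial.map_add, Polynomial.map_pow, Polynomial.map_sub, h2, map_C, hcc,
      Polynomial.map_X, zero_sub, CharTwo.neg_eq]
    rw [CharTwo.add_self_eq_zero, zero_add, map_one]
  have hABmap : A.map f * B.map f = 1 := by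
    rw [← Polynomial.map_mul, ← hL, hmap]
  -- leading coefficients of A and B are even
  have key : ∀ P : ℤ[X], 0 < P.natDegree → IsUnit (P.map f) → (2:ℤ) ∣ P.leadingCoeff := by
    intro P hP hu
    have h0 : (P.map f).natDegree = 0 := natDegree_eq_zero_of_isUnit hu
    have := Polynomial.coeff_eq_zero_of_natDegree_lt (p := P.map f) (n := P.natDegree)
      (by omega)
    rw [Polynomial.coeff_map] at this
    have := (ZMod.intCast_zmod_eq_zero_iff_dvd _ 2).mp this
    exact_mod_cast this
  have hdA : (2:ℤ) ∣ A.leadingCoeff := key A hA (IsUnit.of_mul_eq_one _ hABmap)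
  have hdB : (2:ℤ) ∣ B.leadingCoeff := key B hB
    (IsUnit.of_mul_eq_one _ (by rw [mul_comm] at hABmap; exact hABmap))
  have h4 : (4:ℤ) ∣ L.leadingCoeff := by
    rw [hL, leadingCoeff_mul]
    obtain ⟨a, ha⟩ := hdA; obtain ⟨b, hb⟩ := hdB
    exact ⟨a*b, by rw [ha, hb]; ring⟩
  -- compute L.leadingCoeff
  have hcoeffL : ∀ k, L.coeff k =
      (if k = n then 1 else 0) + (-1)^n * (-2:ℤ)^(n-k) * (n.choose k) + (if k = 0 then c else 0) := by
    intro k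
    rw [hLdef, coeff_add, coeff_add, coeff_X_pow, coeff_two_sub_X_pow, coeff_C]
  rcases Nat.even_or_odd n with he | ho
  · -- n even: leadingCoeff = 2, natDegree = n
    have hcn : L.coeff n = 2 := by
      rw [hcoeffL, if_pos rfl, if_neg (by omega : n ≠ 0), Nat.sub_self, pow_zero,
        Nat.choose_self, he.neg_one_pow]
      norm_num
    have hdeg : L.natDegree = n := by
      apply le_antisymm
      · apply natDegree_le_iff_coeff_eq_zero.mpr
        intro m hm
        rw [hcoeffL, if_neg (by omega : m ≠ n), if_neg (by omega : m ≠ 0),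
          Nat.choose_eq_zero_of_lt hm]
        norm_num
      · exact le_natDegree_of_ne_zero (by rw [hcn]; norm_num)
    rw [leadingCoeff, hdeg, hcn] at h4
    norm_num at h4
  · -- n odd: leadingCoeff = 2n, natDegree = n - 1
    have hcn1 : L.coeff (n-1) = 2 * n := by
      rw [hcoeffL]
      have h1 : n - (n-1) = 1 := by omega
      rw [h1]
      have hch : n.choose (n-1) = n := by
        rw [← Nat.choose_symm (by omega : n - 1 ≤ n), (by omega : n - (n-1) = 1),
          Nat.choose_one_right]
      rw [if_neg (by omega : n - 1 ≠ n), if_neg (by omega : n - 1 ≠ 0), hch, ho.neg_one_pow]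
      push_cast; ring
    have hdeg : L.natDegree = n - 1 := by
      apply le_antisymm
      · apply natDegree_le_iff_coeff_eq_zero.mpr
        intro m hm
        rw [hcoeffL]
        rcases eq_or_lt_of_le (show n ≤ m by omega) with rfl | hlt
        · rw [if_pos rfl, if_neg (by omega : n ≠ 0), Nat.sub_self, pow_zero,
            Nat.choose_self, ho.neg_one_pow]
          norm_num
        · rw [if_neg (by omega : m ≠ n), if_neg (by omega : m ≠ 0),
            Nat.choose_eq_zero_of_lt hlt]
          norm_num
      · exact le_natDegree_of_ne_zero (by rw [hcn1]; positivity)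
    rw [leadingCoeff, hdeg, hcn1] at h4
    obtain ⟨t, ht⟩ := h4
    obtain ⟨s, hs⟩ := ho
    omega
end

section
/- Let f ∈ ℤ[x] be a non-constant polynomial satisfying f(1-x) = f(x) and f = f* (f equals its reversal), and let p be a prime. Then either the reduction of f modulo p is zero, or f(x) = c(x²-x+1) for some integer c not divisible by p with p ≡ 2 mod 3, or the reduction of f modulo p is reducible in 𝔽_p[x]. -/
open Polynomial

-- any two ring endomorphisms of a finite field commute
lemma comm_ringHom_finite_field {K : Type*} [Field K] [Finite K]
    (σ τ : K →+* K) (x : K) : σ (τ x) = τ (σ x) := by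
  obtain ⟨g, hg⟩ := IsCyclic.exists_generator (α := Kˣ)
  rcases eq_or_ne x 0 with rfl | hx
  · simp
  have hσg : σ (g : K) ≠ 0 := by simpa using g.ne_zero
  have hτg : τ (g : K) ≠ 0 := by simpa using g.ne_zero
  obtain ⟨k, hk⟩ := hg (Units.mk0 x hx)
  obtain ⟨m, hm⟩ := hg (Units.mk0 (σ g) hσg)
  obtain ⟨n, hn⟩ := hg (Units.mk0 (τ g) hτg)
  have hkv : (g : K) ^ k = x := by simpa using congrArg Units.val hk
  have hmv : (g : K) ^ m = σ (g : K) := by simpa using congrArg Units.val hm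
  have hnv : (g : K) ^ n = τ (g : K) := by simpa using congrArg Units.val hn
  have hσ : ∀ y : ℤ, σ ((g:K) ^ y) = (g:K) ^ (m * y) := fun y => by
    rw [map_zpow₀, ← hmv, ← zpow_mul]
  have hτ : ∀ y : ℤ, τ ((g:K) ^ y) = (g:K) ^ (n * y) := fun y => by
    rw [map_zpow₀, ← hnv, ← zpow_mul]
  calc σ (τ x) = σ (τ ((g:K) ^ k)) := by rw [hkv]
    _ = (g:K) ^ (m * (n * k)) := by rw [hτ, hσ]
    _ = (g:K) ^ (n * (m * k)) := by congr 1; ring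
    _ = τ (σ ((g:K) ^ k)) := by rw [hσ, hτ]
    _ = τ (σ x) := by rw [hkv]

lemma natDegree_ne_one_of_comp_symm {R : Type*} [CommRing R] {F : R[X]}
    (h : F.comp (1 - X) = F) : F.natDegree ≠ 1 := by
  intro h1
  have he : F.eval 1 = F.eval 0 := by
    conv_rhs => rw [← h]
    rw [eval_comp]
    simp
  have hF := eq_X_add_C_of_natDegree_le_one h1.le
  rw [hF] at he
  simp at he
  have hne : F.coeff 1 ≠ 0 := by
    have h0 : F ≠ 0 := fun h' => by simp [h'] at h1
    have := leadingCoeff_ne_zero.mpr h0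
    rwa [leadingCoeff, h1] at this
  exact hne he

lemma zmod3_root : ((-1 : ZMod 3)) ^ 2 - (-1) + 1 = 0 := by decide

lemma exists_root_quad (p : ℕ) (hp : p.Prime) (h : p % 3 ≠ 2) :
    ∃ r : ZMod p, r ^ 2 - r + 1 = 0 := by
  haveI := Fact.mk hp
  rcases (by omega : p % 3 = 0 ∨ p % 3 = 1) with h0 | h1
  · -- p % 3 = 0 : p = 3
    have h3 : (3 : ℕ) ∣ p := Nat.dvd_of_mod_eq_zero h0
    have hp3 : p = 3 := ((Nat.prime_dvd_prime_iff_eq (by norm_num) hp).mp h3).symm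
    subst hp3
    exact ⟨-1, zmod3_root⟩
  · -- p % 3 = 1
    obtain ⟨g, hg⟩ := IsCyclic.exists_generator (α := (ZMod p)ˣ)
    have hcard : Nat.card (ZMod p)ˣ = p - 1 := by
      rw [Nat.card_eq_fintype_card]; exact ZMod.card_units p
    have horder : orderOf g = p - 1 := by
      rw [orderOf_eq_card_of_forall_mem_zpowers hg]; exact hcard
    have h3dvd : 3 ∣ p - 1 := by omega
    have hp2 : 2 ≤ p := hp.two_le
    have hcube : (g ^ ((p - 1) / 3)) ^ 3 = 1 := by
      rw [← pow_mul, Nat.div_mul_cancel h3dvd, ← horder, pow_orderOf_eq_one]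
    have hne1 : g ^ ((p - 1) / 3) ≠ 1 := by
      intro hcon
      have := orderOf_dvd_of_pow_eq_one hcon
      rw [horder] at this
      have := Nat.le_of_dvd (by omega) this
      omega
    set u : ZMod p := ((g ^ ((p - 1) / 3) : (ZMod p)ˣ) : ZMod p) with hu
    have hu3 : u ^ 3 = 1 := by
      simpa [hu] using congrArg Units.val hcube
    have hune : u ≠ 1 := by
      intro hcon
      exact hne1 (Units.ext (by simpa [hu] using hcon))
    have hfac : (u - 1) * (u ^ 2 + u + 1) = 0 := by
      have : u ^ 3 - 1 = 0 := by rw [hu3]; ring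
      linear_combination this
    have hq : u ^ 2 + u + 1 = 0 := by
      rcases mul_eq_zero.mp hfac with h' | h'
      · exact absurd (sub_eq_zero.mp h') hune
      · exact h'
    exact ⟨-u, by linear_combination hq⟩

lemma no_root_of_irreducible_quad {k : Type*} [Field k] {q : k[X]}
    (hq : Irreducible q) (h2 : q.natDegree = 2) {r : k} (hr : q.eval r = 0) : False := by
  obtain ⟨s, hs⟩ := (dvd_iff_isRoot.mpr hr : X - C r ∣ q)
  rcases hq.isUnit_or_isUnit hs with h | h
  · exact (not_isUnit_of_natDegree_pos _ (by simp [natDegree_X_sub_C])) h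
  · have hs0 : s.natDegree = 0 := natDegree_eq_zero_of_isUnit h
    have : q.natDegree = 1 := by
      rw [hs, natDegree_mul (X_sub_C_ne_zero r) h.ne_zero, natDegree_X_sub_C, hs0]
    omega

open Polynomial in
theorem stmt_15 (f : ℤ[X]) (hf : 0 < f.natDegree)
    (hsym : f.comp (1 - X) = f) (hrev : f.reverse = f)
    (p : ℕ) (hp : p.Prime) :
    f.map (Int.castRingHom (ZMod p)) = 0 ∨
    (∃ c : ℤ, ¬ (p : ℤ) ∣ c ∧ f = C c * (X ^ 2 - X + 1) ∧ p % 3 = 2) ∨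
    (∃ A B : Polynomial (ZMod p), 0 < A.natDegree ∧ 0 < B.natDegree ∧
      f.map (Int.castRingHom (ZMod p)) = A * B) := by
  classical
  by_cases h0 : f.map (Int.castRingHom (ZMod p)) = 0
  · exact Or.inl h0
  by_cases hred : ∃ A B : Polynomial (ZMod p), 0 < A.natDegree ∧ 0 < B.natDegree ∧
      f.map (Int.castRingHom (ZMod p)) = A * B
  · exact Or.inr (Or.inr hred)
  refine Or.inr (Or.inl ?_)
  haveI := Fact.mk hp
  set φ := Int.castRingHom (ZMod p) with hφ
  set F := f.map φ with hF
  have hsymF : F.comp (1 - X) = F := by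
    have h1X : ((1 : ℤ[X]) - X).map φ = 1 - X := by simp
    rw [hF, ← h1X, ← Polynomial.map_comp, hsym]
  have hEv : F.eval 1 = F.eval 0 := by
    conv_rhs => rw [← hsymF]
    rw [eval_comp]; simp
  have hd1 : F.natDegree ≠ 1 := natDegree_ne_one_of_comp_symm hsymF
  have hc0f : f.coeff 0 = f.leadingCoeff := by
    conv_lhs => rw [← hrev]
    rw [coeff_zero_reverse]
  have hlc : φ f.leadingCoeff ≠ 0 := by
    intro hz
    apply hred
    have hF0c : F.coeff 0 = 0 := by rw [hF, coeff_map, hc0f]; exact hz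
    have hFeq : F = X * F.divX := by
      conv_lhs => rw [← X_mul_divX_add F]
      rw [hF0c]; simp
    have hdF0 : F.natDegree ≠ 0 := by
      intro hcon
      apply h0
      have := eq_C_of_natDegree_eq_zero hcon
      rw [this, hF0c, map_zero]
    refine ⟨X, F.divX, by simp, ?_, hFeq⟩
    rw [natDegree_divX_eq_natDegree_tsub_one]
    omega
  have hdeg : F.natDegree = f.natDegree := by
    rw [hF]; exact natDegree_map_of_leadingCoeff_ne_zero φ hlc
  have hrevF : F.reverse = F := by
    rw [reverse, hdeg, hF, reflect_map, ← reverse, hrev]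
  have hE0 : F.eval 0 ≠ 0 := by
    have hcc : F.coeff 0 = F.leadingCoeff := by
      conv_lhs => rw [← hrevF]
      rw [coeff_zero_reverse]
    rw [← coeff_zero_eq_eval_zero, hcc]
    exact leadingCoeff_ne_zero.mpr h0
  have hirr : Irreducible F := by
    constructor
    · exact not_isUnit_of_natDegree_pos F (by rw [hdeg]; exact hf)
    · intro a b hab
      by_contra hcon
      push_neg at hcon
      obtain ⟨ha, hb⟩ := hcon
      apply hred
      have ha0 : a ≠ 0 := by rintro rfl; rw [zero_mul] at hab; exact h0 hab
      have hb0 : b ≠ 0 := by rintro rfl; rw [mul_zero] at hab; exact h0 hab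
      refine ⟨a, b, ?_, ?_, hab⟩
      · refine Nat.pos_of_ne_zero fun hz => ha ?_
        rw [eq_C_of_natDegree_eq_zero hz]
        exact isUnit_C.mpr (isUnit_iff_ne_zero.mpr
          (fun hc => ha0 (by rw [eq_C_of_natDegree_eq_zero hz, hc, map_zero])))
      · refine Nat.pos_of_ne_zero fun hz => hb ?_
        rw [eq_C_of_natDegree_eq_zero hz]
        exact isUnit_C.mpr (isUnit_iff_ne_zero.mpr
          (fun hc => hb0 (by rw [eq_C_of_natDegree_eq_zero hz, hc, map_zero])))
  haveI := Fact.mk hirr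
  haveI : Module.Finite (ZMod p) (AdjoinRoot F) :=
    Module.Finite.of_basis (AdjoinRoot.powerBasis h0).basis
  haveI : Finite (AdjoinRoot F) := Module.finite_of_finite (ZMod p)
  set α := AdjoinRoot.root F with hα
  have hroot : aeval α F = 0 := by rw [AdjoinRoot.aeval_eq, AdjoinRoot.mk_self]
  have hinj : Function.Injective (algebraMap (ZMod p) (AdjoinRoot F)) :=
    (algebraMap (ZMod p) (AdjoinRoot F)).injective
  have hα0 : α ≠ 0 := by
    intro hz
    apply hE0
    apply hinj
    rw [map_zero, ← coeff_zero_eq_eval_zero, ← eval₂_at_zero, ← aeval_def, ← hz, hroot]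
    exact hz.symm
  have hα1 : α ≠ 1 := by
    intro hz
    apply hE0
    rw [← hEv]
    apply hinj
    rw [map_zero, ← eval₂_at_one, ← aeval_def, ← hz, hroot]
  have hroot1 : aeval (1 - α) F = 0 := by
    have h' : aeval α (F.comp (1 - X)) = 0 := by rw [hsymF]; exact hroot
    rw [aeval_comp] at h'
    simpa using h'
  have hroot2 : aeval α⁻¹ F = 0 := by
    haveI := invertibleOfNonzero hα0
    have h2 := (eval₂_reverse_eq_zero_iff (algebraMap (ZMod p) (AdjoinRoot F)) α F).mpr
      (by rw [← aeval_def]; exact hroot)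
    rw [hrevF] at h2
    rw [aeval_def, ← invOf_eq_inv α]
    exact h2
  set σ := AdjoinRoot.liftAlgHom F (Algebra.ofId _ _) (1 - α) hroot1 with hσdef
  set τ := AdjoinRoot.liftAlgHom F (Algebra.ofId _ _) α⁻¹ hroot2 with hτdef
  have hcomm := comm_ringHom_finite_field σ.toRingHom τ.toRingHom α
  have hτα : τ α = α⁻¹ := AdjoinRoot.liftAlgHom_root _ _ _ _
  have hσα : σ α = 1 - α := AdjoinRoot.liftAlgHom_root _ _ _ _
  have hστ : σ (τ α) = (1 - α)⁻¹ := by rw [hτα, map_inv₀, hσα]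
  have hτσ : τ (σ α) = 1 - α⁻¹ := by rw [hσα, map_sub, map_one, hτα]
  have hEq : (1 - α)⁻¹ = 1 - α⁻¹ := by
    rw [← hστ, ← hτσ]
    exact hcomm
  have h1α : (1 : AdjoinRoot F) - α ≠ 0 := sub_ne_zero.mpr (Ne.symm hα1)
  have hquad : α ^ 2 - α + 1 = 0 := by
    have hα' : α * α⁻¹ = 1 := mul_inv_cancel₀ hα0
    have h1 : (1 - α) * (1 - α⁻¹) = 1 := by rw [← hEq]; exact mul_inv_cancel₀ h1α
    linear_combination (-α) * h1 + (α - 1) * hα'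
  have hdvd : F ∣ (X ^ 2 - X + 1 : (ZMod p)[X]) := by
    rw [← AdjoinRoot.mk_eq_zero, ← AdjoinRoot.aeval_eq]
    rw [map_add, map_sub, map_pow, aeval_X, map_one]
    exact hquad
  have hq2 : (X ^ 2 - X + 1 : (ZMod p)[X]).natDegree = 2 := by compute_degree!
  have hQne : (X ^ 2 - X + 1 : (ZMod p)[X]) ≠ 0 := fun hz => by simp [hz] at hq2
  have hFle : F.natDegree ≤ 2 := hq2 ▸ natDegree_le_of_dvd hdvd hQne
  have hF0' : F.natDegree ≠ 0 := by
    intro hz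
    apply hirr.not_isUnit
    rw [eq_C_of_natDegree_eq_zero hz]
    refine isUnit_C.mpr (isUnit_iff_ne_zero.mpr fun hc => hE0 ?_)
    rw [← coeff_zero_eq_eval_zero, hc]
  have hF2 : F.natDegree = 2 := by omega
  have hfd : f.natDegree = 2 := by rw [← hdeg, hF2]
  have hca : f.coeff 0 = f.coeff 2 := by rw [hc0f, leadingCoeff, hfd]
  have hIev : f.eval 1 = f.eval 0 := by
    conv_rhs => rw [← hsym]
    rw [eval_comp]; simp
  have hsum : f.eval 1 = f.coeff 0 + f.coeff 1 + f.coeff 2 := by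
    rw [eval_eq_sum_range, hfd]
    simp [Finset.sum_range_succ]
  have hb : f.coeff 1 = -f.coeff 2 := by
    have h00 : f.eval 0 = f.coeff 0 := (coeff_zero_eq_eval_zero f).symm
    rw [hsum, h00] at hIev
    have := hca
    linarith
  have hfeq : f = C (f.coeff 2) * (X ^ 2 - X + 1) := by
    ext n
    rcases n with _ | _ | _ | n
    · simp [hca]
    · simp [hb, coeff_one]
    · simp [coeff_X_pow, coeff_one, coeff_X]
    · rw [coeff_eq_zero_of_natDegree_lt (by rw [hfd]; omega)]
      simp only [coeff_C_mul, coeff_add, coeff_sub, coeff_X_pow, coeff_X, coeff_one]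
      have h3 : n + 1 + 1 + 1 ≠ 2 := by omega
      have h4 : ¬(n + 1 + 1 + 1 = 1) := by omega
      have h5 : ¬(n + 1 + 1 + 1 = 0) := by omega
      simp [h3, h4, h5]
  refine ⟨f.coeff 2, ?_, hfeq, ?_⟩
  · intro hdvd'
    apply hlc
    rw [leadingCoeff, hfd]
    show ((f.coeff 2 : ℤ) : ZMod p) = 0
    exact (ZMod.intCast_zmod_eq_zero_iff_dvd _ p).mpr hdvd'
  · by_contra hmod
    obtain ⟨r, hr⟩ := exists_root_quad p hp hmod
    have hane : φ (f.coeff 2) ≠ 0 := by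
      have hlcc : f.leadingCoeff = f.coeff 2 := by rw [leadingCoeff, hfd]
      rw [← hlcc]
      exact hlc
    have hFeqQ : F = C (φ (f.coeff 2)) * (X ^ 2 - X + 1) := by
      rw [hF]
      conv_lhs => rw [hfeq]
      simp [Polynomial.map_mul, Polynomial.map_add, Polynomial.map_sub, Polynomial.map_pow]
    have hu : IsUnit (C (φ (f.coeff 2)) : (ZMod p)[X]) :=
      isUnit_C.mpr (isUnit_iff_ne_zero.mpr hane)
    have hassoc : Associated F (X ^ 2 - X + 1 : (ZMod p)[X]) := by
      refine Associated.symm ⟨hu.unit, ?_⟩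
      rw [IsUnit.unit_spec, mul_comm, hFeqQ]
    have hQirr : Irreducible (X ^ 2 - X + 1 : (ZMod p)[X]) := hassoc.irreducible hirr
    refine no_root_of_irreducible_quad hQirr hq2 (r := r) ?_
    rw [eval_add, eval_sub, eval_pow, eval_X, eval_one]
    exact hr
end

section
/- Let m ≥ 1 and suppose 6m = 3^a + 3^b for some integers a, b ≥ 1. Then the polynomial K_{6m}(x) = x^{6m} + (1-x)^{6m} + 1 is irreducible over ℚ. (Proof idea: modulo 3 one has K_{6m}(x) ≡ -(x+1)^{6m}, and K_{6m}(-1) = 2^{6m} + 2 ≡ 3 mod 9, so Eisenstein's criterion at 3 applies to K_{6m}(x-1).) -/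
open Polynomial

lemma choose_two_pow_odd (v u : ℕ) (hu : ¬ 2 ∣ u) :
    ¬ 2 ∣ Nat.choose (2 ^ v * u) (2 ^ v) := by
  induction v with
  | zero => simpa [Nat.choose_one_right] using hu
  | succ v ih =>
    haveI := Fact.mk Nat.prime_two
    have hmod := Choose.choose_modEq_choose_mod_mul_choose_div_nat
      (p := 2) (n := 2 ^ (v + 1) * u) (k := 2 ^ (v + 1))
    have e1 : 2 ^ (v + 1) * u = 2 * (2 ^ v * u) := by ring
    have e2 : 2 ^ (v + 1) = 2 * 2 ^ v := by ring
    rw [e1, e2, Nat.mul_mod_right, Nat.mul_mod_right, Nat.mul_div_cancel_left _ two_pos,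
      Nat.mul_div_cancel_left _ two_pos, Nat.choose_zero_right, one_mul] at hmod
    rw [Nat.ModEq] at hmod
    rw [Nat.dvd_iff_mod_eq_zero] at ih ⊢
    rw [e1, e2, hmod]; exact ih

open Polynomial in
theorem stmt_17 (m a b : ℕ) (hm : 1 ≤ m) (ha : 1 ≤ a) (hb : 1 ≤ b)
    (h : 6 * m = 3 ^ a + 3 ^ b) :
    Irreducible (X ^ (6 * m) + (1 - X) ^ (6 * m) + 1 : ℚ[X]) := by
  set n : ℕ := 6 * m with hn
  have hn0 : n ≠ 0 := by omega
  have hev : Even n := ⟨3 * m, by omega⟩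
  set Q : ℤ[X] := (X - 1) ^ n + (2 - X) ^ n + 1 with hQdef
  -- mod 3 computation
  have h30 : (3 : (ZMod 3)[X]) = 0 := by
    exact_mod_cast CharP.cast_eq_zero ((ZMod 3)[X]) 3
  have hsc : (2 : (ZMod 3)[X]) ^ 3 ^ a = 2 ∧ (2 : (ZMod 3)[X]) ^ 3 ^ b = 2 := by
    constructor <;>
    · rw [show (2 : (ZMod 3)[X]) = -1 by linear_combination h30]
      exact (Odd.pow (by decide)).neg_one_pow
  have hQ3 : Q.map (Int.castRingHom (ZMod 3)) = 2 * X ^ n := by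
    have hx1 : ∀ c : ℕ, ((X : (ZMod 3)[X]) - 1) ^ 3 ^ c = X ^ 3 ^ c - 1 := by
      intro c; rw [sub_pow_char_pow]; simp
    have hx2 : ((2 : (ZMod 3)[X]) - X) ^ 3 ^ a = 2 - X ^ 3 ^ a := by
      rw [sub_pow_char_pow, hsc.1]
    have hx2b : ((2 : (ZMod 3)[X]) - X) ^ 3 ^ b = 2 - X ^ 3 ^ b := by
      rw [sub_pow_char_pow, hsc.2]
    have hnab : n = 3 ^ a + 3 ^ b := h
    rw [hQdef]
    push_cast [Polynomial.map_add, Polynomial.map_pow, Polynomial.map_sub,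
      Polynomial.map_one, Polynomial.map_ofNat, map_X]
    rw [hnab, pow_add, pow_add, hx1 a, hx1 b, hx2, hx2b, pow_add]
    linear_combination (2 - X ^ 3 ^ a - X ^ 3 ^ b : (ZMod 3)[X]) * h30
  -- coeff n ≠ 0, degree
  have hc3 : ∀ k, (Q.coeff k : ZMod 3) = (2 * X ^ n : (ZMod 3)[X]).coeff k := by
    intro k
    rw [← hQ3, Polynomial.coeff_map]
    simp
  have hcn : (Q.coeff n : ZMod 3) = 2 := by rw [hc3]; simp
  have hQn : Q.coeff n ≠ 0 := fun h0 => by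
    rw [h0] at hcn; exact absurd hcn (by decide)
  have d1 : ((X : ℤ[X]) - 1).natDegree ≤ 1 := by
    refine (natDegree_sub_le _ _).trans ?_; simp
  have d2 : ((2 : ℤ[X]) - X).natDegree ≤ 1 := by
    refine (natDegree_sub_le _ _).trans ?_; simp
  have bound : ∀ p : ℤ[X], p.natDegree ≤ 1 → (p ^ n).natDegree ≤ n := fun p hp =>
    natDegree_pow_le.trans (by simpa using Nat.mul_le_mul_left n hp)
  have hdegle : Q.natDegree ≤ n := by
    refine (natDegree_add_le _ _).trans (sup_le ((natDegree_add_le _ _).trans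
      (sup_le (bound _ d1) (bound _ d2))) ?_)
    simp
  have hndeg : Q.natDegree = n := le_antisymm hdegle (le_natDegree_of_ne_zero hQn)
  have hQne : Q ≠ 0 := fun h0 => hQn (by simp [h0])
  have hdeg : Q.degree = (n : ℕ) := by rw [degree_eq_natDegree hQne, hndeg]
  have hC2 : (C (2:ℤ) : ℤ[X]) = 2 := map_ofNat C 2
  -- coeff n of Q is 2
  have mon : ∀ c : ℤ, ((X - C c) ^ n).coeff n = 1 := by
    intro c
    have h1 := (monic_X_sub_C c).pow n
    have hd : ((X - C c) ^ n).natDegree = n := by rw [natDegree_pow, natDegree_X_sub_C, mul_one]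
    have := h1.coeff_natDegree
    rwa [hd] at this
  have hflip : ((2:ℤ[X]) - X) ^ n = (X - C 2) ^ n := by
    rw [hC2, show ((X:ℤ[X]) - 2) = -(2 - X) by ring, hev.neg_pow]
  have hQcn : Q.coeff n = 2 := by
    rw [hQdef, coeff_add, coeff_add, hflip, show ((X:ℤ[X]) - 1) = X - C 1 by rw [C_1],
      mon, mon, coeff_one, if_neg hn0]
    norm_num
  -- mod 2 computation
  have hQ2 : Q.map (Int.castRingHom (ZMod 2)) = (X + 1) ^ n + X ^ n + 1 := by
    have h20 : (2 : (ZMod 2)[X]) = 0 := by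
      exact_mod_cast CharP.cast_eq_zero ((ZMod 2)[X]) 2
    rw [hQdef]
    push_cast [Polynomial.map_add, Polynomial.map_pow, Polynomial.map_sub,
      Polynomial.map_one, Polynomial.map_ofNat, map_X]
    rw [show ((X:(ZMod 2)[X]) - 1) = X + 1 by linear_combination -h20,
      show ((2:(ZMod 2)[X]) - X) = -X by linear_combination h20, hev.neg_pow]
  -- the odd coefficient of Q
  set v : ℕ := n.factorization 2 with hv
  set u : ℕ := n / 2 ^ v with huu
  have hfact : 2 ^ v * u = n := Nat.ordProj_mul_ordCompl_eq_self n 2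
  have hu2 : ¬ 2 ∣ u := Nat.not_dvd_ordCompl Nat.prime_two hn0
  have h3n : 3 ∣ n := by
    rw [h]; exact dvd_add (dvd_pow_self 3 (by omega)) (dvd_pow_self 3 (by omega))
  have h3u : 3 ∣ u := by
    have hcop : Nat.Coprime 3 (2 ^ v) := Nat.Coprime.pow_right v (by norm_num)
    exact hcop.dvd_of_dvd_mul_left (by rw [hfact]; exact h3n)
  have hu1 : 1 < u := by
    obtain ⟨w, hw⟩ := h3u; omega
  have hult : 2 ^ v < n := by
    rw [← hfact]
    exact (Nat.lt_mul_iff_one_lt_right ((show 0 < 2 ^ v from Nat.pow_pos (by norm_num)))).mpr hu1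
  have hodd : ¬ (2:ℤ) ∣ Q.coeff (2 ^ v) := by
    intro hdvd
    have hz : (Q.coeff (2 ^ v) : ZMod 2) = 0 := (ZMod.intCast_zmod_eq_zero_iff_dvd _ 2).mpr hdvd
    have hz2 : ((Q.map (Int.castRingHom (ZMod 2))).coeff (2 ^ v) : ZMod 2) = 0 := by
      rwa [coeff_map, eq_intCast]
    rw [hQ2, coeff_add, coeff_add, coeff_X_add_one_pow, coeff_X_pow, if_neg hult.ne,
      coeff_one, if_neg ((show 0 < 2 ^ v from Nat.pow_pos (by norm_num))).ne', add_zero, add_zero] at hz2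
    have h2c : (2:ℕ) ∣ n.choose (2 ^ v) := (ZMod.natCast_eq_zero_iff _ 2).mp hz2
    exact choose_two_pow_odd v u hu2 (by rwa [hfact])
  -- primitivity
  have hprim : Q.IsPrimitive := by
    intro r hr
    have hall := (C_dvd_iff_dvd_coeff r Q).mp hr
    have hr2 : r ∣ 2 := hQcn ▸ hall n
    have hnot2 : ¬ (2:ℤ) ∣ r := fun h2r => hodd (h2r.trans (hall (2 ^ v)))
    have habs : r.natAbs ∣ 2 := by
      have := Int.natAbs_dvd_natAbs.mpr hr2
      simpa using this
    rcases (Nat.dvd_prime Nat.prime_two).mp habs with h1 | h2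
    · exact Int.isUnit_iff_natAbs_eq.mpr h1
    · exfalso
      apply hnot2
      have : (2:ℤ).natAbs ∣ r.natAbs := by simp [h2]
      exact Int.natAbs_dvd_natAbs.mp this
  -- constant coefficient
  have hc0 : Q.coeff 0 = 2 ^ n + 2 := by
    rw [coeff_zero_eq_eval_zero, hQdef]
    simp [hev.neg_one_pow]
    ring
  have h9 : ¬ (3:ℤ) ^ 2 ∣ Q.coeff 0 := by
    rw [hc0]
    intro hdvd
    have h9' : ((9:ℤ)) ∣ (2 ^ n + 2) := by norm_num at hdvd ⊢; exact hdvd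
    have hz : (((2:ℤ) ^ n + 2 : ℤ) : ZMod 9) = 0 := (ZMod.intCast_zmod_eq_zero_iff_dvd _ 9).mpr h9'
    push_cast at hz
    rw [hn, pow_mul, show ((2:ZMod 9) ^ 6) = 1 by decide, one_pow] at hz
    exact absurd hz (by decide)
  -- Eisenstein
  have hirrQ : Irreducible Q := by
    apply irreducible_of_eisenstein_criterion (P := Ideal.span {(3:ℤ)})
    · exact (Ideal.span_singleton_prime (by norm_num)).mpr Int.prime_three
    · rw [Polynomial.leadingCoeff, hndeg, Ideal.mem_span_singleton]
      intro hdvd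
      have : (Q.coeff n : ZMod 3) = 0 := (ZMod.intCast_zmod_eq_zero_iff_dvd _ 3).mpr hdvd
      rw [hcn] at this
      exact absurd this (by decide)
    · intro k hk
      rw [hdeg] at hk
      have hkn : k < n := by exact_mod_cast hk
      rw [Ideal.mem_span_singleton]
      have : (Q.coeff k : ZMod 3) = 0 := by
        rw [hc3, coeff_ofNat_mul, coeff_X_pow, if_neg hkn.ne, mul_zero]
      exact (ZMod.intCast_zmod_eq_zero_iff_dvd _ 3).mp this
    · rw [hdeg]
      exact_mod_cast Nat.pos_of_ne_zero hn0
    · rw [Ideal.span_singleton_pow, Ideal.mem_span_singleton]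
      exact h9
    · exact hprim
  have hirrQq : Irreducible (Q.map (Int.castRingHom ℚ)) :=
    (Polynomial.IsPrimitive.Int.irreducible_iff_irreducible_map_cast hprim).mp hirrQ
  have key : (algEquivAevalXAddC (-1 : ℚ)) (X ^ n + (1 - X) ^ n + 1 : ℚ[X])
      = Q.map (Int.castRingHom ℚ) := by
    rw [hQdef]
    push_cast [Polynomial.map_add, Polynomial.map_pow, Polynomial.map_sub,
      Polynomial.map_one, Polynomial.map_ofNat, map_X]
    rw [algEquivAevalXAddC_apply]
    simp only [map_add, map_pow, map_sub, map_one, aeval_X, map_neg, map_ofNat]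
    ring
  exact (MulEquiv.irreducible_iff (algEquivAevalXAddC (-1:ℚ))).mp (key ▸ hirrQq)
end

section
/- Let p be an odd prime such that K_6(x) = 2x^6 - 6x^5 + 15x^4 - 20x^3 + 15x^2 - 6x + 2 has a root in 𝔽_p. Then K_6 splits into linear factors over 𝔽_p, and moreover if α is any root of K_6 in 𝔽_p, then the six elements α, 1-α, α⁻¹, α(α-1)⁻¹, (1-α)⁻¹, (α-1)α⁻¹ are exactly the roots of K_6 in 𝔽_p (in particular α ≠ 0, 1). -/
open Polynomial

lemma aux_two_ne (p : ℕ) [Fact p.Prime] (hp2 : p ≠ 2) : (2 : ZMod p) ≠ 0 := by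
  intro h2
  have : ((2 : ℕ) : ZMod p) = 0 := by exact_mod_cast h2
  rw [ZMod.natCast_eq_zero_iff] at this
  have hp : p.Prime := Fact.out
  rcases (Nat.prime_dvd_prime_iff_eq hp Nat.prime_two).mp this with rfl
  exact hp2 rfl

lemma aux_fact (p : ℕ) [Fact p.Prime] (hp2 : p ≠ 2) (α : ZMod p)
    (hα : (2 * X ^ 6 - 6 * X ^ 5 + 15 * X ^ 4 - 20 * X ^ 3 + 15 * X ^ 2 - 6 * X + 2 :
        Polynomial (ZMod p)).eval α = 0) :
    α ≠ 0 ∧ α ≠ 1 ∧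
    (2 * X ^ 6 - 6 * X ^ 5 + 15 * X ^ 4 - 20 * X ^ 3 + 15 * X ^ 2 - 6 * X + 2 :
        Polynomial (ZMod p)) =
      C 2 * (X - C α) * (X - C (1 - α)) * (X - C α⁻¹) * (X - C (1 - α)⁻¹) *
        (X - C (α * (α - 1)⁻¹)) * (X - C ((α - 1) * α⁻¹)) := by
  have h2 : (2 : ZMod p) ≠ 0 := aux_two_ne p hp2
  simp only [eval_add, eval_sub, eval_mul, eval_pow, eval_X, eval_ofNat] at hα
  have hα0 : α ≠ 0 := by rintro rfl; norm_num at hα; exact h2 hα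
  have hα1 : α ≠ 1 := by rintro rfl; norm_num at hα; exact h2 hα
  refine ⟨hα0, hα1, ?_⟩
  have hα1' : (1 : ZMod p) - α ≠ 0 := sub_ne_zero.mpr (Ne.symm hα1)
  have hα1'' : α - 1 ≠ 0 := sub_ne_zero.mpr hα1
  have hu : (α ^ 2 - α : ZMod p) ≠ 0 := by
    intro hu0
    apply hα0
    have : α * (α - 1) = 0 := by linear_combination hu0
    rcases mul_eq_zero.mp this with h | h
    · exact h
    · exact absurd h hα1''
  have hc : 2 * (α ^ 2 - α) ^ 3 + 9 * (α ^ 2 - α) ^ 2 + 6 * (α ^ 2 - α) + 2 = 0 := by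
    linear_combination hα
  have key : (C (α ^ 2 - α)) ^ 2 *
      (2 * X ^ 6 - 6 * X ^ 5 + 15 * X ^ 4 - 20 * X ^ 3 + 15 * X ^ 2 - 6 * X + 2 :
        Polynomial (ZMod p)) =
      C 2 * (X ^ 2 - X - C (α ^ 2 - α)) *
        (C (α ^ 2 - α) * X ^ 2 + X - 1) *
        (C (α ^ 2 - α) * X ^ 2 - C (2 * (α ^ 2 - α) + 1) * X + C (α ^ 2 - α)) := by
    have h0 : C (2 * (α ^ 2 - α) ^ 3 + 9 * (α ^ 2 - α) ^ 2 + 6 * (α ^ 2 - α) + 2)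
        = (0 : Polynomial (ZMod p)) := by rw [hc, map_zero]
    simp only [map_add, map_mul, map_pow, map_sub, map_one, map_ofNat] at h0 ⊢
    linear_combination (X ^ 4 - 2 * X ^ 3 + X ^ 2 : Polynomial (ZMod p)) * h0
  -- field identities
  have f1 : (α ^ 2 - α) * (α⁻¹ + (1 - α)⁻¹) = -1 := by field_simp; ring
  have f2 : (α ^ 2 - α) * (α⁻¹ * (1 - α)⁻¹) = -1 := by field_simp; ring
  have f3 : (α ^ 2 - α) * (α * (α - 1)⁻¹ + (α - 1) * α⁻¹) = 2 * (α ^ 2 - α) + 1 := by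
    field_simp; ring
  have f4 : (α * (α - 1)⁻¹) * ((α - 1) * α⁻¹) = 1 := by field_simp
  have F1 := congrArg (C : ZMod p →+* Polynomial (ZMod p)) f1
  have F2 := congrArg (C : ZMod p →+* Polynomial (ZMod p)) f2
  have F3 := congrArg (C : ZMod p →+* Polynomial (ZMod p)) f3
  have F4 := congrArg (C : ZMod p →+* Polynomial (ZMod p)) f4
  simp only [map_add, map_mul, map_pow, map_sub, map_one, map_neg, map_ofNat] at F1 F2 F3 F4
  -- quadratic factorizations
  have step1 : (X ^ 2 - X - C (α ^ 2 - α) : Polynomial (ZMod p))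
      = (X - C α) * (X - C (1 - α)) := by
    simp only [map_sub, map_pow, map_one]; ring
  have step2 : (C (α ^ 2 - α) * X ^ 2 + X - 1 : Polynomial (ZMod p))
      = C (α ^ 2 - α) * ((X - C α⁻¹) * (X - C (1 - α)⁻¹)) := by
    simp only [map_add, map_mul, map_pow, map_sub, map_one, map_ofNat]
    linear_combination (X : Polynomial (ZMod p)) * F1 - F2
  have step3 : (C (α ^ 2 - α) * X ^ 2 - C (2 * (α ^ 2 - α) + 1) * X + C (α ^ 2 - α) :
        Polynomial (ZMod p))
      = C (α ^ 2 - α) * ((X - C (α * (α - 1)⁻¹)) * (X - C ((α - 1) * α⁻¹))) := by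
    have h21 : (C (2 * (α ^ 2 - α) + 1) : Polynomial (ZMod p))
        = 2 * C (α ^ 2 - α) + 1 := by
      simp only [map_add, map_mul, map_one, map_ofNat]
    rw [h21]
    simp only [map_add, map_mul, map_pow, map_sub, map_one, map_ofNat]
    linear_combination (X : Polynomial (ZMod p)) * F3 - (C α ^ 2 - C α) * F4
  apply mul_left_cancel₀ (pow_ne_zero 2 ((C_ne_zero).mpr hu))
  rw [key, step1, step2, step3]
  ring

open Polynomial in
theorem stmt_19 (p : ℕ) [Fact p.Prime] (hp2 : p ≠ 2)
    (h : ∃ α : ZMod p,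
      (2 * X ^ 6 - 6 * X ^ 5 + 15 * X ^ 4 - 20 * X ^ 3 + 15 * X ^ 2 - 6 * X + 2 :
        Polynomial (ZMod p)).eval α = 0) :
    Polynomial.Splits (Polynomial.map (RingHom.id (ZMod p))
      (2 * X ^ 6 - 6 * X ^ 5 + 15 * X ^ 4 - 20 * X ^ 3 + 15 * X ^ 2 - 6 * X + 2)) ∧
    ∀ α : ZMod p,
      (2 * X ^ 6 - 6 * X ^ 5 + 15 * X ^ 4 - 20 * X ^ 3 + 15 * X ^ 2 - 6 * X + 2 :
        Polynomial (ZMod p)).eval α = 0 →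
      α ≠ 0 ∧ α ≠ 1 ∧
      ∀ β : ZMod p,
        ((2 * X ^ 6 - 6 * X ^ 5 + 15 * X ^ 4 - 20 * X ^ 3 + 15 * X ^ 2 - 6 * X + 2 :
          Polynomial (ZMod p)).eval β = 0 ↔
        β ∈ ({α, 1 - α, α⁻¹, α * (α - 1)⁻¹, (1 - α)⁻¹, (α - 1) * α⁻¹} : Set (ZMod p))) := by
  have h2 : (2 : ZMod p) ≠ 0 := aux_two_ne p hp2
  obtain ⟨α₀, hα₀⟩ := h
  obtain ⟨-, -, hf₀⟩ := aux_fact p hp2 α₀ hα₀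
  constructor
  · rw [map_id, hf₀]
    exact Splits.mul (Splits.mul (Splits.mul (Splits.mul (Splits.mul
      (Splits.mul (Splits.C _) (Splits.X_sub_C _)) (Splits.X_sub_C _))
      (Splits.X_sub_C _)) (Splits.X_sub_C _)) (Splits.X_sub_C _)) (Splits.X_sub_C _)
  · intro α hα
    obtain ⟨h0, h1, hf⟩ := aux_fact p hp2 α hα
    refine ⟨h0, h1, fun β => ?_⟩
    rw [hf]
    simp only [eval_mul, eval_sub, eval_X, eval_C, mul_eq_zero, sub_eq_zero,
      Set.mem_insert_iff, Set.mem_singleton_iff, h2, false_or]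
    tauto
end
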